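/- arXiv:2304.04837 — 6 statements merged into one kernel-verified Lean document; each statement's English description precedes it below -/
import Mathlib

section
/- Let d ∈ ℕ, ε ∈ [0, ∞), and k ∈ ℕ. If 𝒫 is a (k, ε)-secluded partition of ℝ^d such that every member of 𝒫 has outer Lebesgue measure at most 1, then k ≥ (1 + 2ε)^d. -/
open MeasureTheory

open Set Pointwise Filter
open scoped ENNReal NNReal Topology

set_option linter.unusedVariables false


lemma vol_add_singleton (s : Set ℝ) (b : ℝ) : volume (s + {b}) = volume s := by
  rw [Set.add_singleton]
  simp [Set.image_add_right, measure_preimage_add_right]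

lemma vol_singleton_add (s : Set ℝ) (b : ℝ) : volume ({b} + s) = volume s := by
  rw [Set.singleton_add]
  simp [Set.image_add_left, measure_preimage_add]

/-- 1-dimensional additive Brunn–Minkowski for compact sets. -/
lemma add_bm_compact (K L : Set ℝ) (hK : IsCompact K) (hL : IsCompact L)
    (hKn : K.Nonempty) (hLn : L.Nonempty) :
    volume K + volume L ≤ volume (K + L) := by
  obtain ⟨b, hbL, hbub⟩ := hL.exists_isGreatest hLn
  obtain ⟨a, haK, halb⟩ := (hK.neg).exists_isGreatest (hKn.neg)
  have haK' : -a ∈ K := by simpa using haK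
  have halb' : ∀ k ∈ K, -a ≤ k := by
    intro k hk
    have := halb (Set.neg_mem_neg.mpr hk)
    linarith
  set A := K + ({b} : Set ℝ) with hA
  set B := ({-a} : Set ℝ) + L with hB
  have hAsub : A ⊆ K + L := Set.add_subset_add_left (by simpa using hbL)
  have hBsub : B ⊆ K + L := Set.add_subset_add_right (by simpa using haK')
  have hinter : A ∩ B ⊆ {-a + b} := by
    rintro x ⟨hxA, hxB⟩
    rw [hA, Set.add_singleton] at hxA
    rw [hB, Set.singleton_add] at hxB
    obtain ⟨k, hk, rfl⟩ := hxA
    obtain ⟨l, hl, hlx⟩ := hxB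
    have h1 : -a ≤ k := halb' k hk
    have h2 : l ≤ b := hbub hl
    have hkb : k + b = -a + l := by simpa using hlx.symm
    have : k = -a := by linarith
    simp [this]
  have hBmeas : MeasurableSet B := (isCompact_singleton.add hL).measurableSet
  have key : volume (A ∪ B) = volume A + volume B := by
    have h0 : volume (A ∩ B) = 0 :=
      le_antisymm (le_trans (measure_mono hinter) (by simp)) zero_le
    have := measure_union_add_inter (μ := volume) A hBmeas
    rw [h0, add_zero] at this
    exact this
  have hvA : volume A = volume K := vol_add_singleton K b
  have hvB : volume B = volume L := vol_singleton_add L (-a)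
  calc volume K + volume L = volume (A ∪ B) := by rw [key, hvA, hvB]
    _ ≤ volume (K + L) := measure_mono (Set.union_subset hAsub hBsub)

/-- 1-dimensional additive Brunn–Minkowski for measurable sets. -/
lemma add_bm_1d (S T : Set ℝ) (hS : MeasurableSet S) (hT : MeasurableSet T)
    (hSn : S.Nonempty) (hTn : T.Nonempty) :
    volume S + volume T ≤ volume (S + T) := by
  rcases eq_or_ne (volume (S + T)) ⊤ with htop | hfin
  · simp [htop]
  obtain ⟨b, hb⟩ := hTn
  obtain ⟨a, ha⟩ := hSn
  have hSfin : volume S ≠ ⊤ := by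
    intro h
    apply hfin
    have hsub : S + {b} ⊆ S + T := Set.add_subset_add_left (by simpa using hb)
    have h2 := measure_mono (μ := volume) hsub
    rw [vol_add_singleton] at h2
    exact eq_top_iff.mpr (h ▸ h2)
  have hTfin : volume T ≠ ⊤ := by
    intro h
    apply hfin
    have hsub : {a} + T ⊆ S + T := Set.add_subset_add_right (by simpa using ha)
    have h2 := measure_mono (μ := volume) hsub
    rw [vol_singleton_add] at h2
    exact eq_top_iff.mpr (h ▸ h2)
  apply ENNReal.le_of_forall_pos_le_add
  intro δ hδ _
  have hδ2 : ((δ : ℝ≥0∞) / 2) ≠ 0 := by simp [hδ.ne']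
  obtain ⟨K, hKS, hKc, hKv⟩ := hS.exists_isCompact_lt_add hSfin hδ2
  obtain ⟨L, hLT, hLc, hLv⟩ := hT.exists_isCompact_lt_add hTfin hδ2
  set K' := K ∪ {a} with hK'
  set L' := L ∪ {b} with hL'
  have hK'c : IsCompact K' := hKc.union isCompact_singleton
  have hL'c : IsCompact L' := hLc.union isCompact_singleton
  have hK'S : K' ⊆ S := Set.union_subset hKS (by simpa using ha)
  have hL'T : L' ⊆ T := Set.union_subset hLT (by simpa using hb)
  have h1 : volume K' + volume L' ≤ volume (K' + L') :=
    add_bm_compact _ _ hK'c hL'c ⟨a, by simp [hK']⟩ ⟨b, by simp [hL']⟩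
  have h2 : volume (K' + L') ≤ volume (S + T) :=
    measure_mono (Set.add_subset_add hK'S hL'T)
  have h3 : volume S ≤ volume K' + (δ : ℝ≥0∞)/2 :=
    le_trans hKv.le (add_le_add (measure_mono Set.subset_union_left) le_rfl)
  have h4 : volume T ≤ volume L' + (δ : ℝ≥0∞)/2 :=
    le_trans hLv.le (add_le_add (measure_mono Set.subset_union_left) le_rfl)
  calc volume S + volume T ≤ (volume K' + (δ : ℝ≥0∞)/2) + (volume L' + (δ : ℝ≥0∞)/2) :=
        add_le_add h3 h4
    _ = (volume K' + volume L') + ((δ:ℝ≥0∞)/2 + (δ:ℝ≥0∞)/2) := by ring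
    _ ≤ volume (S + T) + δ := by
        rw [ENNReal.add_halves]
        exact add_le_add (le_trans h1 h2) le_rfl


lemma layer_cake_Ioo (J : ℝ → ℝ≥0∞) (hJ : Measurable J) :
    ∫⁻ l in Ioo (0:ℝ) 1, volume {x | ENNReal.ofReal l ≤ J x} = ∫⁻ x, min (J x) 1 := by
  have mS : MeasurableSet {p : ℝ × ℝ | ENNReal.ofReal p.1 ≤ J p.2} :=
    measurableSet_le (ENNReal.measurable_ofReal.comp measurable_fst) (hJ.comp measurable_snd)
  have hm : ∀ l : ℝ, MeasurableSet {x | ENNReal.ofReal l ≤ J x} := fun l =>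
    measurableSet_le measurable_const hJ
  have swap := lintegral_lintegral_swap (μ := volume.restrict (Ioo (0:ℝ) 1)) (ν := volume)
    (f := fun l x => ({p : ℝ × ℝ | ENNReal.ofReal p.1 ≤ J p.2}).indicator (1 : ℝ × ℝ → ℝ≥0∞) (l, x))
    ((measurable_one.indicator mS).aemeasurable)
  have lhs_eq : ∫⁻ l in Ioo (0:ℝ) 1, volume {x | ENNReal.ofReal l ≤ J x}
      = ∫⁻ l in Ioo (0:ℝ) 1, ∫⁻ x,
          ({p : ℝ × ℝ | ENNReal.ofReal p.1 ≤ J p.2}).indicator (1 : ℝ × ℝ → ℝ≥0∞) (l, x) := by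
    apply lintegral_congr
    intro l
    have : ∀ x : ℝ, ({p : ℝ × ℝ | ENNReal.ofReal p.1 ≤ J p.2}).indicator (1 : ℝ × ℝ → ℝ≥0∞) (l, x)
        = ({x : ℝ | ENNReal.ofReal l ≤ J x}).indicator (1 : ℝ → ℝ≥0∞) x := by
      intro x
      simp only [Set.indicator_apply, Set.mem_setOf_eq, Pi.one_apply]
    rw [show (fun x : ℝ => ({p : ℝ × ℝ | ENNReal.ofReal p.1 ≤ J p.2}).indicator (1 : ℝ × ℝ → ℝ≥0∞) (l, x))
        = fun x : ℝ => ({x : ℝ | ENNReal.ofReal l ≤ J x}).indicator (1 : ℝ → ℝ≥0∞) x from funext this]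
    rw [lintegral_indicator_one (hm l)]
  have rhs_eq : ∫⁻ x : ℝ, ∫⁻ l in Ioo (0:ℝ) 1,
      ({p : ℝ × ℝ | ENNReal.ofReal p.1 ≤ J p.2}).indicator (1 : ℝ × ℝ → ℝ≥0∞) (l, x) = ∫⁻ x, min (J x) 1 := by
    apply lintegral_congr
    intro x
    have hmx : MeasurableSet {l : ℝ | ENNReal.ofReal l ≤ J x} :=
      measurableSet_le ENNReal.measurable_ofReal measurable_const
    have : ∀ l : ℝ, ({p : ℝ × ℝ | ENNReal.ofReal p.1 ≤ J p.2}).indicator (1 : ℝ × ℝ → ℝ≥0∞) (l, x)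
        = ({l : ℝ | ENNReal.ofReal l ≤ J x}).indicator (1 : ℝ → ℝ≥0∞) l := by
      intro l
      simp only [Set.indicator_apply, Set.mem_setOf_eq, Pi.one_apply]
    rw [show (fun l : ℝ => ({p : ℝ × ℝ | ENNReal.ofReal p.1 ≤ J p.2}).indicator (1 : ℝ × ℝ → ℝ≥0∞) (l, x))
        = fun l : ℝ => ({l : ℝ | ENNReal.ofReal l ≤ J x}).indicator (1 : ℝ → ℝ≥0∞) l from funext this]
    rw [lintegral_indicator_one hmx, Measure.restrict_apply hmx]
    by_cases h1 : (1:ℝ≥0∞) ≤ J x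
    · have hset : {l : ℝ | ENNReal.ofReal l ≤ J x} ∩ Ioo 0 1 = Ioo (0:ℝ) 1 := by
        apply Set.inter_eq_right.mpr
        intro l hl
        refine le_trans ?_ h1
        rw [show (1:ℝ≥0∞) = ENNReal.ofReal 1 by simp]
        exact ENNReal.ofReal_le_ofReal hl.2.le
      rw [hset, Real.volume_Ioo, min_eq_right h1]
      norm_num
    · push_neg at h1
      have hne : J x ≠ ⊤ := ne_top_of_lt (lt_of_lt_of_le h1 le_top)
      have htR : (J x).toReal < 1 := by
        have := (ENNReal.toReal_lt_toReal hne ENNReal.one_ne_top).mpr h1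
        simpa using this
      have htR0 : 0 ≤ (J x).toReal := ENNReal.toReal_nonneg
      have hset : {l : ℝ | ENNReal.ofReal l ≤ J x} ∩ Ioo 0 1 = Ioc (0:ℝ) (J x).toReal := by
        ext l
        simp only [Set.mem_inter_iff, Set.mem_setOf_eq, Set.mem_Ioo, Set.mem_Ioc]
        constructor
        · rintro ⟨hle, h0, hl1⟩
          exact ⟨h0, (ENNReal.ofReal_le_iff_le_toReal hne).mp hle⟩
        · rintro ⟨h0, hle⟩
          exact ⟨(ENNReal.ofReal_le_iff_le_toReal hne).mpr hle, h0, lt_of_le_of_lt hle htR⟩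
      rw [hset, Real.volume_Ioc, min_eq_left h1.le]
      simp [ENNReal.ofReal_toReal hne]
  rw [lhs_eq, swap, rhs_eq]


lemma rpow_ne_zero_of {x : ℝ≥0∞} (hx : x ≠ 0) (hxt : x ≠ ⊤) (y : ℝ) : x ^ y ≠ 0 := by
  intro h
  rcases ENNReal.rpow_eq_zero_iff.mp h with ⟨h1, _⟩ | ⟨h1, _⟩
  exacts [hx h1, hxt h1]

/-- weighted AM-GM for two ENNReal numbers, positive weights -/
lemma ennreal_amgm {w₁ w₂ : ℝ} (hw₁ : 0 < w₁) (hw₂ : 0 < w₂) (hw : w₁ + w₂ = 1)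
    (a b : ℝ≥0∞) : a ^ w₁ * b ^ w₂ ≤ ENNReal.ofReal w₁ * a + ENNReal.ofReal w₂ * b := by
  rcases eq_or_ne a ⊤ with rfl | ha
  · rcases eq_or_ne b 0 with rfl | hb
    · rw [ENNReal.zero_rpow_of_pos hw₂, mul_zero]; exact zero_le
    · have : ENNReal.ofReal w₁ * ⊤ = ⊤ := by
        rw [ENNReal.mul_top]; simp [ENNReal.ofReal_eq_zero, not_le, hw₁]
      rw [this]; simp [top_add]
  rcases eq_or_ne b ⊤ with rfl | hb
  · rcases eq_or_ne a 0 with rfl | ha0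
    · rw [ENNReal.zero_rpow_of_pos hw₁, zero_mul]; exact zero_le
    · have : ENNReal.ofReal w₂ * ⊤ = ⊤ := by
        rw [ENNReal.mul_top]; simp [ENNReal.ofReal_eq_zero, not_le, hw₂]
      rw [this]; simp [add_top]
  lift a to ℝ≥0 using ha
  lift b to ℝ≥0 using hb
  set w1 : ℝ≥0 := Real.toNNReal w₁ with hw1def
  set w2 : ℝ≥0 := Real.toNNReal w₂ with hw2def
  have hcoe1 : ((w1 : ℝ)) = w₁ := Real.coe_toNNReal _ hw₁.le
  have hcoe2 : ((w2 : ℝ)) = w₂ := Real.coe_toNNReal _ hw₂.le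
  have hsum : w1 + w2 = 1 := by
    rw [← NNReal.coe_inj]
    push_cast
    rw [hcoe1, hcoe2, hw]
  have h := NNReal.geom_mean_le_arith_mean2_weighted w1 w2 a b hsum
  have e1 : ENNReal.ofReal w₁ = (w1 : ℝ≥0∞) := rfl
  have e2 : ENNReal.ofReal w₂ = (w2 : ℝ≥0∞) := rfl
  rw [e1, e2, ← hcoe1, ← hcoe2, ← ENNReal.coe_rpow_of_nonneg a w1.coe_nonneg,
    ← ENNReal.coe_rpow_of_nonneg b w2.coe_nonneg, ← ENNReal.coe_mul, ← ENNReal.coe_mul,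
    ← ENNReal.coe_mul, ← ENNReal.coe_add, ENNReal.coe_le_coe]
  exact h

/-- core of 1-d Prékopa–Leindler: essential sups positive and finite -/
lemma pl1_core (t : ℝ) (ht0 : 0 < t) (ht1 : t < 1)
    (F G H : ℝ → ℝ≥0∞) (hF : Measurable F) (hG : Measurable G) (hH : Measurable H)
    (hα0 : essSup F volume ≠ 0) (hαt : essSup F volume ≠ ⊤)
    (hβ0 : essSup G volume ≠ 0) (hβt : essSup G volume ≠ ⊤)
    (hyp : ∀ x y : ℝ, F x ^ (1 - t) * G y ^ t ≤ H ((1 - t) * x + t * y)) :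
    (∫⁻ x, F x) ^ (1 - t) * (∫⁻ y, G y) ^ t ≤ ∫⁻ z, H z := by
  have h1t : 0 < 1 - t := by linarith
  set α := essSup F volume with hα
  set β := essSup G volume with hβ
  set c := α ^ (1 - t) * β ^ t with hc
  have hc0 : c ≠ 0 := mul_ne_zero (rpow_ne_zero_of hα0 hαt _) (rpow_ne_zero_of hβ0 hβt _)
  have hct : c ≠ ⊤ := ENNReal.mul_ne_top
    (ENNReal.rpow_ne_top_of_nonneg h1t.le hαt) (ENNReal.rpow_ne_top_of_nonneg ht0.le hβt)
  set Fh := fun x => F x / α with hFh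
  set Gh := fun x => G x / β with hGh
  set Hh := fun x => H x / c with hHh
  have mFh : Measurable Fh := hF.div_const α
  have mGh : Measurable Gh := hG.div_const β
  have mHh : Measurable Hh := hH.div_const c
  -- superlevel sets
  set S : ℝ → Set ℝ := fun l => {x | ENNReal.ofReal l ≤ Fh x} with hS
  set T : ℝ → Set ℝ := fun l => {x | ENNReal.ofReal l ≤ Gh x} with hT
  set U : ℝ → Set ℝ := fun l => {x | ENNReal.ofReal l ≤ Hh x} with hU
  have mS : ∀ l, MeasurableSet (S l) := fun l => measurableSet_le measurable_const mFh
  have mT : ∀ l, MeasurableSet (T l) := fun l => measurableSet_le measurable_const mGh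
  -- positivity of superlevel measures
  have hSpos : ∀ l ∈ Ioo (0:ℝ) 1, volume (S l) ≠ 0 := by
    rintro l ⟨hl0, hl1⟩ h0
    have hae : ∀ᵐ x, x ∉ S l := measure_eq_zero_iff_ae_notMem.mp h0
    have : ∀ᵐ x, F x ≤ ENNReal.ofReal l * α := by
      filter_upwards [hae] with x hx
      simp only [hS, Set.mem_setOf_eq, not_le] at hx
      have : F x < ENNReal.ofReal l * α := by
        rw [ENNReal.div_lt_iff (Or.inl hα0) (Or.inl hαt)] at hx
        exact hx
      exact this.le
    have hle : α ≤ ENNReal.ofReal l * α := essSup_le_of_ae_le _ this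
    have hlt : ENNReal.ofReal l * α < 1 * α := by
      apply ENNReal.mul_lt_mul_left hα0 hαt
      exact ENNReal.ofReal_lt_one.mpr hl1
    rw [one_mul] at hlt
    exact absurd hle (not_le.mpr hlt)
  have hTpos : ∀ l ∈ Ioo (0:ℝ) 1, volume (T l) ≠ 0 := by
    rintro l ⟨hl0, hl1⟩ h0
    have hae : ∀ᵐ x, x ∉ T l := measure_eq_zero_iff_ae_notMem.mp h0
    have : ∀ᵐ x, G x ≤ ENNReal.ofReal l * β := by
      filter_upwards [hae] with x hx
      simp only [hT, Set.mem_setOf_eq, not_le] at hx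
      have : G x < ENNReal.ofReal l * β := by
        rw [ENNReal.div_lt_iff (Or.inl hβ0) (Or.inl hβt)] at hx
        exact hx
      exact this.le
    have hle : β ≤ ENNReal.ofReal l * β := essSup_le_of_ae_le _ this
    have hlt : ENNReal.ofReal l * β < 1 * β := by
      apply ENNReal.mul_lt_mul_left hβ0 hβt
      exact ENNReal.ofReal_lt_one.mpr hl1
    rw [one_mul] at hlt
    exact absurd hle (not_le.mpr hlt)
  -- the superlevel-set inequality
  have key : ∀ l ∈ Ioo (0:ℝ) 1,
      ENNReal.ofReal (1-t) * volume (S l) + ENNReal.ofReal t * volume (T l)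
        ≤ volume (U l) := by
    rintro l hl
    set S' := (1-t) • (S l) with hS'
    set T' := t • (T l) with hT'
    have hmS' : MeasurableSet S' := by
      have : S' = (fun u : ℝ => (1-t)⁻¹ • u) ⁻¹' (S l) := by
        ext u
        rw [hS', Set.mem_smul_set_iff_inv_smul_mem₀ (by positivity : (1:ℝ)-t ≠ 0)]
        rfl
      rw [this]
      exact (measurable_const_smul _) (mS l)
    have hmT' : MeasurableSet T' := by
      have : T' = (fun u : ℝ => t⁻¹ • u) ⁻¹' (T l) := by
        ext u
        rw [hT', Set.mem_smul_set_iff_inv_smul_mem₀ (ne_of_gt ht0)]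
        rfl
      rw [this]
      exact (measurable_const_smul _) (mT l)
    have hvS' : volume S' = ENNReal.ofReal (1-t) * volume (S l) := by
      rw [hS', Measure.addHaar_smul_of_nonneg volume h1t.le]
      congr 2
      simp [Module.finrank_self]
    have hvT' : volume T' = ENNReal.ofReal t * volume (T l) := by
      rw [hT', Measure.addHaar_smul_of_nonneg volume ht0.le]
      congr 2
      simp [Module.finrank_self]
    have hsub : S' + T' ⊆ U l := by
      rintro z hz
      rw [Set.mem_add] at hz
      obtain ⟨u, hu, v, hv, rfl⟩ := hz
      obtain ⟨x, hx, rfl⟩ := hu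
      obtain ⟨y, hy, rfl⟩ := hv
      have hFx : ENNReal.ofReal l * α ≤ F x := by
        rw [hS] at hx
        exact (ENNReal.le_div_iff_mul_le (Or.inl hα0) (Or.inl hαt)).mp hx
      have hGy : ENNReal.ofReal l * β ≤ G y := by
        rw [hT] at hy
        exact (ENNReal.le_div_iff_mul_le (Or.inl hβ0) (Or.inl hβt)).mp hy
      have hHz : ENNReal.ofReal l * c ≤ H ((1-t) * x + t * y) := by
        refine le_trans ?_ (hyp x y)
        have e1 : (ENNReal.ofReal l * α) ^ (1-t) ≤ F x ^ (1-t) :=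
          ENNReal.rpow_le_rpow hFx h1t.le
        have e2 : (ENNReal.ofReal l * β) ^ t ≤ G y ^ t :=
          ENNReal.rpow_le_rpow hGy ht0.le
        refine le_trans (le_of_eq ?_) (mul_le_mul' e1 e2)
        rw [ENNReal.mul_rpow_of_nonneg _ _ h1t.le, ENNReal.mul_rpow_of_nonneg _ _ ht0.le]
        have : ENNReal.ofReal l ^ (1-t) * α ^ (1-t) * (ENNReal.ofReal l ^ t * β ^ t)
            = (ENNReal.ofReal l ^ (1-t) * ENNReal.ofReal l ^ t) * (α ^ (1-t) * β ^ t) := by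
          ring
        rw [this, ← ENNReal.rpow_add _ _
          (by simp only [ne_eq, ENNReal.ofReal_eq_zero, not_le]; exact hl.1)
          ENNReal.ofReal_ne_top]
        norm_num
        rfl
      show ENNReal.ofReal l ≤ Hh ((1-t) • x + t • y)
      rw [hHh]
      rw [ENNReal.le_div_iff_mul_le (Or.inl hc0) (Or.inl hct)]
      simpa [smul_eq_mul] using hHz
    calc ENNReal.ofReal (1-t) * volume (S l) + ENNReal.ofReal t * volume (T l)
        = volume S' + volume T' := by rw [hvS', hvT']
      _ ≤ volume (S' + T') := add_bm_1d S' T' hmS' hmT'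
          (Set.Nonempty.smul_set (nonempty_of_measure_ne_zero (hSpos l hl)))
          (Set.Nonempty.smul_set (nonempty_of_measure_ne_zero (hTpos l hl)))
      _ ≤ volume (U l) := measure_mono hsub
  -- integrate over l ∈ (0,1)
  have hmono : ∀ J : ℝ → ℝ≥0∞, Antitone (fun l : ℝ => volume {x | ENNReal.ofReal l ≤ J x}) := by
    intro J l l' hll'
    apply measure_mono
    intro x hx
    exact le_trans (ENNReal.ofReal_le_ofReal hll') hx
  have int_ineq : ENNReal.ofReal (1-t) * (∫⁻ x, min (Fh x) 1)
      + ENNReal.ofReal t * (∫⁻ x, min (Gh x) 1) ≤ ∫⁻ x, min (Hh x) 1 := by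
    rw [← layer_cake_Ioo Fh mFh, ← layer_cake_Ioo Gh mGh, ← layer_cake_Ioo Hh mHh]
    rw [← lintegral_const_mul' _ _ ENNReal.ofReal_ne_top,
        ← lintegral_const_mul' _ _ ENNReal.ofReal_ne_top,
        ← lintegral_add_left]
    · exact setLIntegral_mono ((hmono Hh).measurable) key
    · exact (measurable_const.mul ((hmono Fh).measurable))
  -- replace min by the functions themselves
  have hFh1 : ∀ᵐ x, Fh x ≤ 1 := by
    filter_upwards [ENNReal.ae_le_essSup F] with x hx
    show F x / α ≤ 1
    rw [ENNReal.div_le_iff_le_mul (Or.inl hα0) (Or.inr one_ne_zero), one_mul]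
    exact hx
  have hGh1 : ∀ᵐ x, Gh x ≤ 1 := by
    filter_upwards [ENNReal.ae_le_essSup G] with x hx
    show G x / β ≤ 1
    rw [ENNReal.div_le_iff_le_mul (Or.inl hβ0) (Or.inr one_ne_zero), one_mul]
    exact hx
  have hFmin : ∫⁻ x, min (Fh x) 1 = ∫⁻ x, Fh x := by
    apply lintegral_congr_ae
    filter_upwards [hFh1] with x hx
    exact min_eq_left hx
  have hGmin : ∫⁻ x, min (Gh x) 1 = ∫⁻ x, Gh x := by
    apply lintegral_congr_ae
    filter_upwards [hGh1] with x hx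
    exact min_eq_left hx
  have hHmin : ∫⁻ x, min (Hh x) 1 ≤ ∫⁻ x, Hh x := lintegral_mono fun x => min_le_left _ _
  have main : ENNReal.ofReal (1-t) * (∫⁻ x, Fh x) + ENNReal.ofReal t * (∫⁻ x, Gh x)
      ≤ ∫⁻ x, Hh x := by
    rw [← hFmin, ← hGmin]
    exact le_trans int_ineq hHmin
  -- AM-GM
  have amgm : (∫⁻ x, Fh x) ^ (1-t) * (∫⁻ x, Gh x) ^ t ≤ ∫⁻ x, Hh x :=
    le_trans (ennreal_amgm h1t ht0 (by ring) _ _) main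
  -- denormalize
  have hIF : ∫⁻ x, Fh x = (∫⁻ x, F x) * α⁻¹ := by
    rw [hFh]
    simp_rw [div_eq_mul_inv]
    exact lintegral_mul_const' _ _ (ENNReal.inv_ne_top.mpr hα0)
  have hIG : ∫⁻ x, Gh x = (∫⁻ x, G x) * β⁻¹ := by
    rw [hGh]
    simp_rw [div_eq_mul_inv]
    exact lintegral_mul_const' _ _ (ENNReal.inv_ne_top.mpr hβ0)
  have hIH : ∫⁻ x, Hh x = (∫⁻ x, H x) * c⁻¹ := by
    rw [hHh]
    simp_rw [div_eq_mul_inv]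
    exact lintegral_mul_const' _ _ (ENNReal.inv_ne_top.mpr hc0)
  rw [hIF, hIG, hIH] at amgm
  have expand : ((∫⁻ x, F x) * α⁻¹) ^ (1-t) * ((∫⁻ x, G x) * β⁻¹) ^ t
      = ((∫⁻ x, F x) ^ (1-t) * (∫⁻ x, G x) ^ t) * c⁻¹ := by
    rw [ENNReal.mul_rpow_of_nonneg _ _ h1t.le, ENNReal.mul_rpow_of_nonneg _ _ ht0.le,
      ENNReal.inv_rpow, ENNReal.inv_rpow, hc,
      ENNReal.mul_inv (Or.inl (rpow_ne_zero_of hα0 hαt _))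
        (Or.inl (ENNReal.rpow_ne_top_of_nonneg h1t.le hαt))]
    ring
  rw [expand] at amgm
  have hcancel : ∀ X : ℝ≥0∞, X * c⁻¹ * c = X := fun X => by
    rw [mul_assoc, ENNReal.inv_mul_cancel hc0 hct, mul_one]
  calc (∫⁻ x, F x) ^ (1-t) * (∫⁻ y, G y) ^ t
      = (∫⁻ x, F x) ^ (1-t) * (∫⁻ y, G y) ^ t * c⁻¹ * c := (hcancel _).symm
    _ ≤ (∫⁻ z, H z) * c⁻¹ * c := mul_le_mul_left amgm c
    _ = ∫⁻ z, H z := hcancel _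

/-- 1-dimensional Prékopa–Leindler inequality (multiplicative form). -/
lemma pl_one_dim (t : ℝ) (ht0 : 0 < t) (ht1 : t < 1)
    (F G H : ℝ → ℝ≥0∞) (hF : Measurable F) (hG : Measurable G) (hH : Measurable H)
    (hyp : ∀ x y : ℝ, F x ^ (1 - t) * G y ^ t ≤ H ((1 - t) * x + t * y)) :
    (∫⁻ x, F x) ^ (1 - t) * (∫⁻ y, G y) ^ t ≤ ∫⁻ z, H z := by
  have h1t : 0 < 1 - t := by linarith
  rcases eq_or_ne (∫⁻ x, F x) 0 with hF0 | hF0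
  · rw [hF0, ENNReal.zero_rpow_of_pos h1t, zero_mul]; exact zero_le
  rcases eq_or_ne (∫⁻ y, G y) 0 with hG0 | hG0
  · rw [hG0, ENNReal.zero_rpow_of_pos ht0, mul_zero]; exact zero_le
  -- truncations
  set FM : ℕ → ℝ → ℝ≥0∞ := fun M x => min (F x) M with hFM
  set GM : ℕ → ℝ → ℝ≥0∞ := fun M x => min (G x) M with hGM
  have mFM : ∀ M, Measurable (FM M) := fun M => hF.min measurable_const
  have mGM : ∀ M, Measurable (GM M) := fun M => hG.min measurable_const
  have monoF : Monotone FM := fun M M' h x => min_le_min le_rfl (by exact_mod_cast Nat.cast_le.mpr h)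
  have monoG : Monotone GM := fun M M' h x => min_le_min le_rfl (by exact_mod_cast Nat.cast_le.mpr h)
  have supF : ∀ x, (⨆ M : ℕ, FM M x) = F x := by
    intro x
    apply le_antisymm (iSup_le fun M => min_le_left _ _)
    rcases eq_or_ne (F x) ⊤ with htop | hne
    · rw [htop]
      have : ∀ M : ℕ, FM M x = M := by intro M; rw [hFM]; simp [htop]
      calc (⊤:ℝ≥0∞) = ⨆ M : ℕ, (M : ℝ≥0∞) := ENNReal.iSup_natCast.symm
        _ ≤ ⨆ M : ℕ, FM M x := by apply iSup_mono; intro M; rw [this M]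
    · obtain ⟨M, hM⟩ := ENNReal.exists_nat_gt hne
      refine le_trans (le_of_eq ?_) (le_iSup (fun M => FM M x) M)
      rw [hFM]; simp [min_eq_left hM.le]
  have supG : ∀ x, (⨆ M : ℕ, GM M x) = G x := by
    intro x
    apply le_antisymm (iSup_le fun M => min_le_left _ _)
    rcases eq_or_ne (G x) ⊤ with htop | hne
    · rw [htop]
      have : ∀ M : ℕ, GM M x = M := by intro M; rw [hGM]; simp [htop]
      calc (⊤:ℝ≥0∞) = ⨆ M : ℕ, (M : ℝ≥0∞) := ENNReal.iSup_natCast.symm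
        _ ≤ ⨆ M : ℕ, GM M x := by apply iSup_mono; intro M; rw [this M]
    · obtain ⟨M, hM⟩ := ENNReal.exists_nat_gt hne
      refine le_trans (le_of_eq ?_) (le_iSup (fun M => GM M x) M)
      rw [hGM]; simp [min_eq_left hM.le]
  -- per-truncation inequality
  have each : ∀ M : ℕ, (∫⁻ x, FM M x) ^ (1-t) * (∫⁻ y, GM M y) ^ t ≤ ∫⁻ z, H z := by
    intro M
    rcases eq_or_ne (essSup (FM M) volume) 0 with hα | hα
    · have : ∫⁻ x, FM M x = 0 := by
        rw [lintegral_congr_ae (ENNReal.essSup_eq_zero_iff.mp hα)]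
        simp
      rw [this, ENNReal.zero_rpow_of_pos h1t, zero_mul]; exact zero_le
    rcases eq_or_ne (essSup (GM M) volume) 0 with hβ | hβ
    · have : ∫⁻ y, GM M y = 0 := by
        rw [lintegral_congr_ae (ENNReal.essSup_eq_zero_iff.mp hβ)]
        simp
      rw [this, ENNReal.zero_rpow_of_pos ht0, mul_zero]; exact zero_le
    have hαt : essSup (FM M) volume ≠ ⊤ := by
      refine ne_top_of_le_ne_top (ENNReal.natCast_ne_top M) ?_
      exact essSup_le_of_ae_le _ (Filter.Eventually.of_forall fun x => min_le_right _ _)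
    have hβt : essSup (GM M) volume ≠ ⊤ := by
      refine ne_top_of_le_ne_top (ENNReal.natCast_ne_top M) ?_
      exact essSup_le_of_ae_le _ (Filter.Eventually.of_forall fun x => min_le_right _ _)
    apply pl1_core t ht0 ht1 (FM M) (GM M) H (mFM M) (mGM M) hH hα hαt hβ hβt
    intro x y
    refine le_trans ?_ (hyp x y)
    exact mul_le_mul' (ENNReal.rpow_le_rpow (min_le_left _ _) h1t.le)
      (ENNReal.rpow_le_rpow (min_le_left _ _) ht0.le)
  -- pass to the limit
  have hIF : (⨆ M : ℕ, ∫⁻ x, FM M x) = ∫⁻ x, F x := by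
    rw [← lintegral_iSup mFM monoF]
    exact lintegral_congr fun x => supF x
  have hIG : (⨆ M : ℕ, ∫⁻ y, GM M y) = ∫⁻ y, G y := by
    rw [← lintegral_iSup mGM monoG]
    exact lintegral_congr fun x => supG x
  have tF : Filter.Tendsto (fun M : ℕ => ∫⁻ x, FM M x) Filter.atTop (𝓝 (∫⁻ x, F x)) := by
    rw [← hIF]
    exact tendsto_atTop_iSup fun M M' h => lintegral_mono (monoF h)
  have tG : Filter.Tendsto (fun M : ℕ => ∫⁻ y, GM M y) Filter.atTop (𝓝 (∫⁻ y, G y)) := by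
    rw [← hIG]
    exact tendsto_atTop_iSup fun M M' h => lintegral_mono (monoG h)
  have tF' : Filter.Tendsto (fun M : ℕ => (∫⁻ x, FM M x) ^ (1-t)) Filter.atTop
      (𝓝 ((∫⁻ x, F x) ^ (1-t))) :=
    (ENNReal.continuous_rpow_const.tendsto _).comp tF
  have tG' : Filter.Tendsto (fun M : ℕ => (∫⁻ y, GM M y) ^ t) Filter.atTop
      (𝓝 ((∫⁻ y, G y) ^ t)) :=
    (ENNReal.continuous_rpow_const.tendsto _).comp tG
  have tmul : Filter.Tendsto
      (fun M : ℕ => (∫⁻ x, FM M x) ^ (1-t) * (∫⁻ y, GM M y) ^ t) Filter.atTop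
      (𝓝 ((∫⁻ x, F x) ^ (1-t) * (∫⁻ y, G y) ^ t)) := by
    apply ENNReal.Tendsto.mul tF' ?_ tG' ?_
    · left
      intro h
      rcases ENNReal.rpow_eq_zero_iff.mp h with ⟨h1, _⟩ | ⟨_, h2⟩
      · exact hF0 h1
      · linarith
    · left
      intro h
      rcases ENNReal.rpow_eq_zero_iff.mp h with ⟨h1, _⟩ | ⟨_, h2⟩
      · exact hG0 h1
      · linarith
  exact le_of_tendsto tmul (Filter.Eventually.of_forall each)

lemma insertNth_comb {d : ℕ} (t : ℝ) (a b : ℝ) (x y : Fin d → ℝ) (i : Fin (d+1)) :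
    (Fin.insertNth (α := fun _ => ℝ) i ((1-t)*a + t*b) ((1-t) • x + t • y))
      = (1-t) • Fin.insertNth (α := fun _ => ℝ) i a x
        + t • Fin.insertNth (α := fun _ => ℝ) i b y := by
  funext j
  refine Fin.succAboveCases i ?_ ?_ j
  · simp
  · intro k
    simp

/-- Prékopa–Leindler in `Fin d → ℝ`. -/
lemma pl_dim (d : ℕ) (t : ℝ) (ht0 : 0 < t) (ht1 : t < 1) :
    ∀ (F G H : (Fin d → ℝ) → ℝ≥0∞), Measurable F → Measurable G → Measurable H →
    (∀ x y, F x ^ (1-t) * G y ^ t ≤ H ((1-t) • x + t • y)) →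
    (∫⁻ x, F x) ^ (1-t) * (∫⁻ y, G y) ^ t ≤ ∫⁻ z, H z := by
  induction d with
  | zero =>
    intro F G H hF hG hH hyp
    have huniv : (volume : Measure (Fin 0 → ℝ)) Set.univ = 1 := by
      rw [MeasureTheory.volume_pi, Measure.pi_univ]
      simp
    rw [lintegral_unique F, lintegral_unique G, lintegral_unique H, huniv, mul_one, mul_one,
      mul_one]
    have key : ∀ z : Fin 0 → ℝ, F z ^ (1-t) * G z ^ t ≤ H z := fun z =>
      le_trans (hyp z z) (le_of_eq (congrArg H (Subsingleton.elim _ _)))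
    exact key _
  | succ d ih =>
    intro F G H hF hG hH hyp
    set e := MeasurableEquiv.piFinSuccAbove (fun _ : Fin (d+1) => ℝ) 0 with he
    have hvp : MeasurePreserving e volume volume :=
      volume_preserving_piFinSuccAbove (fun _ : Fin (d+1) => ℝ) 0
    have hvps : MeasurePreserving e.symm volume volume := hvp.symm e
    set F' : ℝ × (Fin d → ℝ) → ℝ≥0∞ := fun p => F (e.symm p) with hF'def
    set G' : ℝ × (Fin d → ℝ) → ℝ≥0∞ := fun p => G (e.symm p) with hG'def
    set H' : ℝ × (Fin d → ℝ) → ℝ≥0∞ := fun p => H (e.symm p) with hH'def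
    have hF' : Measurable F' := hF.comp e.symm.measurable
    have hG' : Measurable G' := hG.comp e.symm.measurable
    have hH' : Measurable H' := hH.comp e.symm.measurable
    have hsymm : ∀ (a : ℝ) (x : Fin d → ℝ), e.symm (a, x) = (0 : Fin (d+1)).insertNth a x := by
      intro a x
      rfl
    set F1 : ℝ → ℝ≥0∞ := fun s => ∫⁻ x, F' (s, x) with hF1def
    set G1 : ℝ → ℝ≥0∞ := fun s => ∫⁻ x, G' (s, x) with hG1def
    set H1 : ℝ → ℝ≥0∞ := fun s => ∫⁻ x, H' (s, x) with hH1def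
    have mF1 : Measurable F1 :=
      Measurable.lintegral_prod_right (f := fun s x => F' (s, x)) hF'
    have mG1 : Measurable G1 :=
      Measurable.lintegral_prod_right (f := fun s x => G' (s, x)) hG'
    have mH1 : Measurable H1 :=
      Measurable.lintegral_prod_right (f := fun s x => H' (s, x)) hH'
    have hIF : ∫⁻ x, F x = ∫⁻ s, F1 s := by
      rw [← hvps.lintegral_comp hF]
      rw [show (volume : Measure (ℝ × (Fin d → ℝ))) = Measure.prod volume volume from
        Measure.volume_eq_prod _ _]
      exact lintegral_prod _ hF'.aemeasurable
    have hIG : ∫⁻ y, G y = ∫⁻ s, G1 s := by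
      rw [← hvps.lintegral_comp hG]
      rw [show (volume : Measure (ℝ × (Fin d → ℝ))) = Measure.prod volume volume from
        Measure.volume_eq_prod _ _]
      exact lintegral_prod _ hG'.aemeasurable
    have hIH : ∫⁻ z, H z = ∫⁻ s, H1 s := by
      rw [← hvps.lintegral_comp hH]
      rw [show (volume : Measure (ℝ × (Fin d → ℝ))) = Measure.prod volume volume from
        Measure.volume_eq_prod _ _]
      exact lintegral_prod _ hH'.aemeasurable
    rw [hIF, hIG, hIH]
    apply pl_one_dim t ht0 ht1 F1 G1 H1 mF1 mG1 mH1
    intro s r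
    apply ih (fun x => F' (s, x)) (fun y => G' (r, y)) (fun z => H' ((1-t)*s + t*r, z))
      (hF'.comp measurable_prodMk_left) (hG'.comp measurable_prodMk_left)
      (hH'.comp measurable_prodMk_left)
    intro x y
    have : H' ((1-t)*s + t*r, (1-t) • x + t • y)
        = H ((1-t) • e.symm (s, x) + t • e.symm (r, y)) := by
      rw [hH'def]
      simp only
      rw [hsymm, hsymm, hsymm, insertNth_comb]
    rw [this]
    exact hyp _ _

/-- Multiplicative Brunn–Minkowski, set form. -/
lemma set_mbm (d : ℕ) (t : ℝ) (ht0 : 0 < t) (ht1 : t < 1)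
    (A B U : Set (Fin d → ℝ)) (hA : MeasurableSet A) (hB : MeasurableSet B)
    (hU : ∀ x ∈ A, ∀ y ∈ B, (1-t) • x + t • y ∈ U) :
    volume A ^ (1-t) * volume B ^ t ≤ volume U := by
  have h1t : 0 < 1 - t := by linarith
  set U' := toMeasurable volume U with hU'def
  have hmU' : MeasurableSet U' := measurableSet_toMeasurable _ _
  have key := pl_dim d t ht0 ht1 (A.indicator (1 : (Fin d → ℝ) → ℝ≥0∞)) (B.indicator (1 : (Fin d → ℝ) → ℝ≥0∞))
    (U'.indicator (1 : (Fin d → ℝ) → ℝ≥0∞)) (measurable_one.indicator hA) (measurable_one.indicator hB)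
    (measurable_one.indicator hmU') ?_
  · rwa [lintegral_indicator_one hA, lintegral_indicator_one hB, lintegral_indicator_one hmU',
      measure_toMeasurable] at key
  · intro x y
    by_cases hx : x ∈ A
    · by_cases hy : y ∈ B
      · have hmem : (1-t) • x + t • y ∈ U' := subset_toMeasurable _ _ (hU x hx y hy)
        simp [Set.indicator_of_mem, hx, hy, hmem]
      · simp [Set.indicator_of_notMem, hy, ENNReal.zero_rpow_of_pos ht0]
    · simp [Set.indicator_of_notMem, hx, ENNReal.zero_rpow_of_pos h1t]

/-- Weak Brunn–Minkowski: fattening a measurable set by an open ℓ∞ ball multiplies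
its (truncated) measure by `(1+2ε')^d`. -/
lemma weak_bm (d : ℕ) (ε' : ℝ) (hε' : 0 < ε') (A : Set (Fin d → ℝ)) (hA : MeasurableSet A) :
    ENNReal.ofReal ((1+2*ε')^d) * min (volume A) 1 ≤ volume (A + Metric.ball 0 ε') := by
  set s : ℝ := 1 + 2*ε' with hsdef
  have hs1 : 1 < s := by simp [hsdef]; linarith
  have hs0 : 0 < s := by linarith
  set t : ℝ := 2*ε'/s with htdef
  have ht0 : 0 < t := by positivity
  have ht1 : t < 1 := by rw [htdef, div_lt_one hs0]; linarith
  have h1t : 1 - t = 1/s := by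
    rw [htdef]
    rw [eq_div_iff hs0.ne', sub_mul, div_mul_cancel₀ _ hs0.ne', hsdef]
    ring
  set A1 := s • A with hA1def
  have hmA1 : MeasurableSet A1 := by
    have : A1 = (fun x : Fin d → ℝ => s⁻¹ • x) ⁻¹' A := by
      ext z
      rw [hA1def, Set.mem_smul_set_iff_inv_smul_mem₀ hs0.ne']
      rfl
    rw [this]
    exact (continuous_const_smul _).measurable hA
  set B1 := Metric.ball (0 : Fin d → ℝ) (s/2) with hB1def
  have hmB1 : MeasurableSet B1 := Metric.isOpen_ball.measurableSet
  have hU : ∀ x ∈ A1, ∀ y ∈ B1, (1-t) • x + t • y ∈ A + Metric.ball 0 ε' := by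
    rintro x hx y hy
    obtain ⟨a, ha, rfl⟩ := hx
    have e1 : (1-t) • s • a = a := by
      rw [smul_smul, h1t]
      rw [show 1/s * s = 1 by field_simp, one_smul]
    rw [e1]
    apply Set.add_mem_add ha
    rw [mem_ball_zero_iff] at hy ⊢
    rw [norm_smul]
    calc ‖t‖ * ‖y‖ < ‖t‖ * (s/2) := by
          apply mul_lt_mul_of_pos_left hy
          simp [abs_of_pos ht0, ht0]
      _ = ε' := by
          rw [Real.norm_eq_abs, abs_of_pos ht0, htdef]
          field_simp
  have bm := set_mbm d t ht0 ht1 A1 B1 _ hmA1 hmB1 hU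
  have hfinrank : Module.finrank ℝ (Fin d → ℝ) = d := by
    rw [Module.finrank_fintype_fun_eq_card, Fintype.card_fin]
  have hvA1 : volume A1 = ENNReal.ofReal (s^d) * volume A := by
    rw [hA1def, Measure.addHaar_smul_of_nonneg volume hs0.le, hfinrank]
  have hvB1 : volume B1 = ENNReal.ofReal (s^d) := by
    rw [hB1def, Real.volume_pi_ball _ (by positivity), Fintype.card_fin]
    congr 1
    ring
  rw [hvA1, hvB1] at bm
  refine le_trans ?_ bm
  have hsd0 : ENNReal.ofReal (s^d) ≠ 0 := by
    simp only [ne_eq, ENNReal.ofReal_eq_zero, not_le]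
    positivity
  have expand : (ENNReal.ofReal (s^d) * volume A) ^ (1-t) * ENNReal.ofReal (s^d) ^ t
      = ENNReal.ofReal (s^d) * (volume A) ^ (1-t) := by
    rw [ENNReal.mul_rpow_of_nonneg _ _ (by linarith : (0:ℝ) ≤ 1-t)]
    have : ENNReal.ofReal (s^d) ^ (1-t) * (volume A) ^ (1-t) * ENNReal.ofReal (s^d) ^ t
        = (ENNReal.ofReal (s^d) ^ (1-t) * ENNReal.ofReal (s^d) ^ t) * (volume A) ^ (1-t) := by
      ring
    rw [this, ← ENNReal.rpow_add _ _ hsd0 ENNReal.ofReal_ne_top]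
    norm_num
  rw [expand]
  apply mul_le_mul_right
  rcases le_total (volume A) 1 with h | h
  · rw [min_eq_left h]
    calc volume A = volume A ^ (1:ℝ) := (ENNReal.rpow_one _).symm
      _ ≤ volume A ^ (1-t) := ENNReal.rpow_le_rpow_of_exponent_ge h (by linarith)
  · rw [min_eq_right h]
    calc (1:ℝ≥0∞) = 1 ^ (1-t) := (ENNReal.one_rpow _).symm
      _ ≤ volume A ^ (1-t) := ENNReal.rpow_le_rpow h (by linarith)

/-- Fattening an arbitrary set of outer measure at most 1 by an open ℓ∞ ε-ball
multiplies outer measure by at least `(1+2ε'')^d`, for any `ε'' < ε`. -/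
lemma fatten_ge (d : ℕ) (ε ε'' : ℝ) (hε'' : 0 < ε'') (hlt : ε'' < ε) (A : Set (Fin d → ℝ))
    (hA1 : volume A ≤ 1) :
    ENNReal.ofReal ((1+2*ε'')^d) * volume A ≤ volume (⋃ x ∈ A, Metric.ball x ε) := by
  set W := ⋃ x ∈ A, Metric.ball x ε with hWdef
  have hWopen : IsOpen W := isOpen_biUnion fun x _ => Metric.isOpen_ball
  set A' := {p : Fin d → ℝ | Metric.closedBall p ε'' ⊆ W} with hA'def
  have hA'open : IsOpen A' := by
    rw [Metric.isOpen_iff]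
    intro p hp
    obtain ⟨δ, hδpos, hδ⟩ :=
      (isCompact_closedBall p ε'').exists_thickening_subset_open hWopen hp
    refine ⟨δ, hδpos, ?_⟩
    intro q hq
    show Metric.closedBall q ε'' ⊆ W
    refine subset_trans ?_ hδ
    intro y hy
    rw [Metric.mem_thickening_iff]
    refine ⟨y - q + p, ?_, ?_⟩
    · rw [Metric.mem_closedBall] at hy ⊢
      have : y - q + p - p = y - q := by abel
      rw [dist_eq_norm, this, ← dist_eq_norm]
      exact hy
    · have : y - (y - q + p) = q - p := by abel
      rw [dist_eq_norm, this, ← dist_eq_norm]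
      exact Metric.mem_ball.mp hq
  have hsub : A ⊆ A' := by
    intro x hx
    show Metric.closedBall x ε'' ⊆ W
    refine subset_trans (Metric.closedBall_subset_ball hlt) ?_
    rw [hWdef]
    exact Set.subset_biUnion_of_mem (u := fun x => Metric.ball x ε) hx
  have hplus : A' + Metric.ball 0 ε'' ⊆ W := by
    rintro z hz
    rw [Set.mem_add] at hz
    obtain ⟨p, hp, b, hb, rfl⟩ := hz
    apply hp
    rw [Metric.mem_closedBall, dist_eq_norm]
    have : p + b - p = b := by abel
    rw [this]
    exact (mem_ball_zero_iff.mp hb).le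
  have hwbm := weak_bm d ε'' hε'' A' hA'open.measurableSet
  have hminge : volume A ≤ min (volume A') 1 :=
    le_min (measure_mono hsub) hA1
  calc ENNReal.ofReal ((1+2*ε'')^d) * volume A
      ≤ ENNReal.ofReal ((1+2*ε'')^d) * min (volume A') 1 := mul_le_mul_right hminge _
    _ ≤ volume (A' + Metric.ball 0 ε'') := hwbm
    _ ≤ volume W := measure_mono hplus

/-- The central counting inequality. -/
lemma main_chain (d k : ℕ) (ε ε'' : ℝ) (hε : 0 < ε) (hε''0 : 0 < ε'') (hlt : ε'' < ε)
    (P : Set (Set (Fin d → ℝ))) (hP : Setoid.IsPartition P)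
    (hmeas : ∀ X ∈ P, volume X ≤ 1)
    (hsec : ∀ p : Fin d → ℝ,
      {X ∈ P | (X ∩ Metric.closedBall p ε).Nonempty}.encard ≤ (k : ℕ∞))
    (n : ℕ) :
    (1+2*ε'')^d * (n:ℝ)^d ≤ (k:ℝ) * ((n:ℝ)+2*ε)^d := by
  set Qn : Set (Fin d → ℝ) := Set.pi Set.univ (fun _ => Ico (0:ℝ) (n:ℝ)) with hQndef
  set Qbig : Set (Fin d → ℝ) := Set.pi Set.univ (fun _ => Icc (-ε) ((n:ℝ)+ε)) with hQbigdef
  have hQbigmeas : MeasurableSet Qbig :=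
    MeasurableSet.univ_pi fun i => measurableSet_Icc
  have hvQn : volume Qn = ENNReal.ofReal ((n:ℝ)^d) := by
    rw [hQndef, volume_pi_pi]
    simp only [Real.volume_Ico, sub_zero]
    rw [Finset.prod_const, Finset.card_univ, Fintype.card_fin,
      ← ENNReal.ofReal_pow (Nat.cast_nonneg n)]
  have hvQbig : volume Qbig = ENNReal.ofReal (((n:ℝ)+2*ε)^d) := by
    rw [hQbigdef, volume_pi_pi]
    simp only [Real.volume_Icc]
    rw [show (n:ℝ) + ε - -ε = (n:ℝ) + 2*ε by ring, Finset.prod_const, Finset.card_univ,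
      Fintype.card_fin, ← ENNReal.ofReal_pow (by positivity)]
  -- finiteness of the relevant family
  set m : ℕ := ⌈(n:ℝ)/(2*ε)⌉₊ with hmdef
  have h2ε : (0:ℝ) < 2*ε := by linarith
  have hFin : {X ∈ P | (X ∩ Qn).Nonempty}.Finite := by
    have hsubU : {X ∈ P | (X ∩ Qn).Nonempty} ⊆
        ⋃ v : Fin d → Fin m, {X ∈ P | (X ∩ Metric.closedBall
          (fun i => 2*ε*((v i : ℕ):ℝ) + ε) ε).Nonempty} := by
      rintro X ⟨hXP, x, hxX, hxQ⟩
      have hx0 : ∀ i, 0 ≤ x i := fun i => ((Set.mem_univ_pi.mp hxQ) i).1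
      have hxn : ∀ i, x i < (n:ℝ) := fun i => ((Set.mem_univ_pi.mp hxQ) i).2
      have hvlt : ∀ i, ⌊x i / (2*ε)⌋₊ < m := by
        intro i
        rw [hmdef]
        apply Nat.floor_lt (div_nonneg (hx0 i) h2ε.le) |>.mpr
        calc x i / (2*ε) < (n:ℝ) / (2*ε) := by gcongr; exact hxn i
          _ ≤ (⌈(n:ℝ)/(2*ε)⌉₊ : ℝ) := Nat.le_ceil _
      set v : Fin d → Fin m := fun i => ⟨⌊x i / (2*ε)⌋₊, hvlt i⟩ with hvdef
      apply Set.mem_iUnion.mpr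
      refine ⟨v, hXP, ⟨x, hxX, ?_⟩⟩
      rw [Metric.mem_closedBall]
      apply dist_pi_le_iff hε.le |>.mpr
      intro i
      rw [Real.dist_eq]
      have hfl : (⌊x i / (2*ε)⌋₊ : ℝ) ≤ x i / (2*ε) := Nat.floor_le (div_nonneg (hx0 i) h2ε.le)
      have hfl2 : x i / (2*ε) < (⌊x i / (2*ε)⌋₊ : ℝ) + 1 := Nat.lt_floor_add_one _
      have e1 : 2*ε*(⌊x i / (2*ε)⌋₊ : ℝ) ≤ x i := by
        have := mul_le_mul_of_nonneg_left hfl h2ε.le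
        rwa [mul_div_cancel₀ _ h2ε.ne'] at this
      have e2 : x i < 2*ε*(⌊x i / (2*ε)⌋₊ : ℝ) + 2*ε := by
        have := mul_lt_mul_of_pos_left hfl2 h2ε
        rw [mul_div_cancel₀ _ h2ε.ne'] at this
        linarith [this]
      rw [abs_le]
      constructor
      · show -ε ≤ x i - (2*ε*((v i : ℕ):ℝ) + ε)
        have : ((v i : ℕ):ℝ) = (⌊x i / (2*ε)⌋₊ : ℝ) := by rw [hvdef]
        rw [this]
        linarith
      · show x i - (2*ε*((v i : ℕ):ℝ) + ε) ≤ ε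
        have : ((v i : ℕ):ℝ) = (⌊x i / (2*ε)⌋₊ : ℝ) := by rw [hvdef]
        rw [this]
        linarith
    refine Set.Finite.subset (Set.finite_iUnion fun v => ?_) hsubU
    exact Set.finite_of_encard_le_coe (hsec _)
  set F := hFin.toFinset with hFdef
  -- cover bound
  have hcover : ENNReal.ofReal ((n:ℝ)^d) ≤ ∑ X ∈ F, volume (X ∩ Qn) := by
    rw [← hvQn]
    refine le_trans (measure_mono ?_) (measure_biUnion_finset_le F _)
    intro x hx
    obtain ⟨X, ⟨hXP, hxX⟩, _⟩ := hP.2 x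
    apply Set.mem_biUnion (show X ∈ F by
      rw [hFdef, Set.Finite.mem_toFinset]; exact ⟨hXP, ⟨x, hxX, hx⟩⟩)
    exact ⟨hxX, hx⟩
  -- fattened sets
  set W : Set (Fin d → ℝ) → Set (Fin d → ℝ) := fun X => ⋃ x ∈ X ∩ Qn, Metric.ball x ε
    with hWdef
  have hWmeas : ∀ X, MeasurableSet (W X) := fun X =>
    (isOpen_biUnion fun x _ => Metric.isOpen_ball).measurableSet
  have hfat : ∀ X ∈ F, ENNReal.ofReal ((1+2*ε'')^d) * volume (X ∩ Qn) ≤ volume (W X) := by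
    intro X hXF
    have hXP : X ∈ P := ((hFin.mem_toFinset).mp hXF).1
    have h1 : volume (X ∩ Qn) ≤ 1 :=
      le_trans (measure_mono Set.inter_subset_left) (hmeas X hXP)
    exact fatten_ge d ε ε'' hε''0 hlt (X ∩ Qn) h1
  -- each W X lies in Qbig
  have hWsub : ∀ X, W X ⊆ Qbig := by
    intro X q hq
    obtain ⟨x, hxXQ, hqball⟩ := Set.mem_iUnion₂.mp hq
    have hxQ := hxXQ.2
    apply Set.mem_univ_pi.mpr
    intro i
    have hxi := Set.mem_univ_pi.mp hxQ i
    have hdisti : dist (q i) (x i) < ε :=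
      lt_of_le_of_lt (dist_le_pi_dist q x i) (Metric.mem_ball.mp hqball)
    rw [Real.dist_eq, abs_lt] at hdisti
    constructor
    · have := hxi.1; linarith [hdisti.1]
    · have := hxi.2; linarith [hdisti.2]
  -- overlap bound
  have hover : ∑ X ∈ F, volume (W X) ≤ (k:ℝ≥0∞) * ENNReal.ofReal (((n:ℝ)+2*ε)^d) := by
    rw [← hvQbig]
    have pointwise : ∀ q, ∑ X ∈ F, (W X).indicator (1 : (Fin d → ℝ) → ℝ≥0∞) q
        ≤ (k:ℝ≥0∞) * Qbig.indicator (1 : (Fin d → ℝ) → ℝ≥0∞) q := by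
      intro q
      by_cases hq : q ∈ Qbig
      · rw [Set.indicator_of_mem hq, Pi.one_apply, mul_one]
        classical
        have hsum : ∑ X ∈ F, (W X).indicator (1 : (Fin d → ℝ) → ℝ≥0∞) q
            = ((F.filter fun X => q ∈ W X).card : ℝ≥0∞) := by
          rw [← Finset.sum_boole]
          refine Finset.sum_congr rfl fun X _ => ?_
          simp [Set.indicator_apply]
        rw [hsum]
        have hsubS : ↑(F.filter fun X => q ∈ W X)
            ⊆ {X ∈ P | (X ∩ Metric.closedBall q ε).Nonempty} := by
          intro X hX
          simp only [Finset.coe_filter, Set.mem_setOf_eq] at hX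
          obtain ⟨hXF, hqW⟩ := hX
          have hXP : X ∈ P := ((hFin.mem_toFinset).mp hXF).1
          obtain ⟨x, hxXQ, hqball⟩ := Set.mem_iUnion₂.mp hqW
          refine ⟨hXP, ⟨x, hxXQ.1, ?_⟩⟩
          rw [Metric.mem_closedBall, dist_comm]
          exact (Metric.mem_ball.mp hqball).le
        have hcard : ((F.filter fun X => q ∈ W X).card : ℕ∞) ≤ (k:ℕ∞) :=
          le_trans (le_trans (le_of_eq (Set.encard_coe_eq_coe_finsetCard _).symm)
            (Set.encard_le_encard hsubS)) (hsec q)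
        have hcard' : (F.filter fun X => q ∈ W X).card ≤ k := by exact_mod_cast hcard
        exact_mod_cast hcard'
      · rw [Set.indicator_of_notMem hq, mul_zero]
        have hzero : ∀ X ∈ F, (W X).indicator (1 : (Fin d → ℝ) → ℝ≥0∞) q = 0 := by
          intro X _
          exact Set.indicator_of_notMem (fun hqW => hq (hWsub X hqW)) _
        rw [Finset.sum_congr rfl hzero]
        simp
    calc ∑ X ∈ F, volume (W X)
        = ∑ X ∈ F, ∫⁻ q, (W X).indicator (1 : (Fin d → ℝ) → ℝ≥0∞) q := by
          exact Finset.sum_congr rfl fun X _ => (lintegral_indicator_one (hWmeas X)).symm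
      _ = ∫⁻ q, ∑ X ∈ F, (W X).indicator (1 : (Fin d → ℝ) → ℝ≥0∞) q :=
          (lintegral_finset_sum F fun X _ => measurable_one.indicator (hWmeas X)).symm
      _ ≤ ∫⁻ q, (k:ℝ≥0∞) * Qbig.indicator (1 : (Fin d → ℝ) → ℝ≥0∞) q := lintegral_mono pointwise
      _ = (k:ℝ≥0∞) * volume Qbig := by
          rw [lintegral_const_mul _ (measurable_one.indicator hQbigmeas),
            lintegral_indicator_one hQbigmeas]
  -- chain
  have chain : ENNReal.ofReal ((1+2*ε'')^d) * ENNReal.ofReal ((n:ℝ)^d)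
      ≤ (k:ℝ≥0∞) * ENNReal.ofReal (((n:ℝ)+2*ε)^d) :=
    calc ENNReal.ofReal ((1+2*ε'')^d) * ENNReal.ofReal ((n:ℝ)^d)
        ≤ ENNReal.ofReal ((1+2*ε'')^d) * ∑ X ∈ F, volume (X ∩ Qn) :=
          mul_le_mul_right hcover _
      _ = ∑ X ∈ F, ENNReal.ofReal ((1+2*ε'')^d) * volume (X ∩ Qn) := Finset.mul_sum _ _ _
      _ ≤ ∑ X ∈ F, volume (W X) := Finset.sum_le_sum hfat
      _ ≤ (k:ℝ≥0∞) * ENNReal.ofReal (((n:ℝ)+2*ε)^d) := hover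
  rw [← ENNReal.ofReal_mul (by positivity), ← ENNReal.ofReal_natCast k,
    ← ENNReal.ofReal_mul (by positivity)] at chain
  exact (ENNReal.ofReal_le_ofReal_iff (by positivity)).mp chain

/-- If `P` is a `(k, ε)`-secluded partition of `ℝ^d` (modeled as `Fin d → ℝ` with the ℓ∞ norm)
all of whose members have outer Lebesgue measure at most `1`, then `k ≥ (1 + 2ε)^d`. -/
theorem secluded_degree_lower_bound
    (d : ℕ) (hd : 0 < d) (ε : ℝ) (hε : 0 ≤ ε) (k : ℕ)
    (P : Set (Set (Fin d → ℝ))) (hP : Setoid.IsPartition P)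
    (hmeas : ∀ X ∈ P, volume X ≤ 1)
    (hsec : ∀ p : Fin d → ℝ,
      {X ∈ P | (X ∩ Metric.closedBall p ε).Nonempty}.encard ≤ (k : ℕ∞)) :
    (1 + 2 * ε) ^ d ≤ (k : ℝ) := by
  rcases eq_or_lt_of_le hε with hε0 | hεpos
  · -- degenerate case ε = 0
    obtain ⟨X, ⟨hXP, hX0⟩, -⟩ := hP.2 0
    have hne : {X' ∈ P | (X' ∩ Metric.closedBall 0 ε).Nonempty}.Nonempty :=
      ⟨X, hXP, ⟨0, hX0, Metric.mem_closedBall_self hε⟩⟩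
    have h1 : (1:ℕ∞) ≤ (k:ℕ∞) :=
      le_trans (Set.one_le_encard_iff_nonempty.mpr hne) (hsec 0)
    have h1' : 1 ≤ k := by exact_mod_cast h1
    calc (1+2*ε)^d = 1 := by rw [← hε0]; norm_num
      _ ≤ (k:ℝ) := by exact_mod_cast h1'
  · -- main case ε > 0
    have claim1 : ∀ ε'' : ℝ, 0 < ε'' → ε'' < ε → (1+2*ε'')^d ≤ (k:ℝ) := by
      intro ε'' h1 h2
      have hn : ∀ n : ℕ, 1 ≤ n → (1+2*ε'')^d ≤ (k:ℝ) * (((n:ℝ)+2*ε)/(n:ℝ))^d := by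
        intro n hn1
        have hnpos : (0:ℝ) < (n:ℝ) := by exact_mod_cast hn1
        have hch := main_chain d k ε ε'' hεpos h1 h2 P hP hmeas hsec n
        rw [div_pow, ← mul_div_assoc, le_div_iff₀ (pow_pos hnpos d)]
        exact hch
      have h0 : Filter.Tendsto (fun nn : ℕ => ((nn:ℝ)+2*ε)/(nn:ℝ)) Filter.atTop (𝓝 1) := by
        have heq : (fun nn : ℕ => ((nn:ℝ)+2*ε)/(nn:ℝ)) =ᶠ[Filter.atTop]
            (fun nn : ℕ => 1 + (2*ε)/(nn:ℝ)) := by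
          filter_upwards [Filter.eventually_ge_atTop 1] with nn hnn
          have : ((nn:ℝ)) ≠ 0 := by positivity
          field_simp
        rw [Filter.tendsto_congr' heq]
        have : Filter.Tendsto (fun nn : ℕ => (2*ε)/(nn:ℝ)) Filter.atTop (𝓝 0) :=
          tendsto_const_div_atTop_nhds_zero_nat (2*ε)
        have := Filter.Tendsto.const_add (1:ℝ) this
        simpa using this
      have htend : Filter.Tendsto (fun nn : ℕ => (k:ℝ) * (((nn:ℝ)+2*ε)/(nn:ℝ))^d)
          Filter.atTop (𝓝 ((k:ℝ))) := by
        have := Filter.Tendsto.const_mul (k:ℝ) (Filter.Tendsto.pow h0 d)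
        simpa using this
      exact ge_of_tendsto htend (Filter.eventually_atTop.mpr ⟨1, fun n h => hn n h⟩)
    have htend2 : Filter.Tendsto (fun mm : ℕ => (1+2*(ε - ε/((mm:ℝ)+2)))^d)
        Filter.atTop (𝓝 ((1+2*ε)^d)) := by
      have hdiv : Filter.Tendsto (fun mm : ℕ => ε/((mm:ℝ)+2)) Filter.atTop (𝓝 0) := by
        apply Filter.Tendsto.div_atTop (tendsto_const_nhds)
        exact Filter.tendsto_atTop_add_const_right _ 2 tendsto_natCast_atTop_atTop
      have : Filter.Tendsto (fun mm : ℕ => 1+2*(ε - ε/((mm:ℝ)+2))) Filter.atTop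
          (𝓝 (1+2*ε)) := by
        have := Filter.Tendsto.const_mul (2:ℝ)
          (Filter.Tendsto.const_sub ε hdiv)
        have := Filter.Tendsto.const_add (1:ℝ) this
        simpa using this
      have := Filter.Tendsto.pow this d
      simpa using this
    apply le_of_tendsto htend2
    apply Filter.Eventually.of_forall
    intro mm
    apply claim1
    · have hlt : ε/((mm:ℝ)+2) < ε := by
        apply div_lt_self hεpos
        have : (0:ℝ) ≤ (mm:ℝ) := Nat.cast_nonneg mm
        linarith
      linarith
    · have hpos : 0 < ε/((mm:ℝ)+2) := by positivity
      linarith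
end

section
/- Let d ∈ ℕ and let χ : [0,1]^d → C be a coloring of the unit cube by a set C of colors such that no color class contains points of opposite faces, i.e., for every color c ∈ C and every coordinate i ∈ {1,…,d}, the projection of χ^{-1}(c) onto the i-th coordinate does not contain both 0 and 1. Then for any ε ∈ (0, 1/2] there exists a point p ∈ [0,1]^d such that the open ℓ∞ ball of radius ε centered at p contains points of at least (1 + (2/3)ε)^d different colors. -/
open MeasureTheory
open scoped ENNReal


lemma step_core {C : Type*} (F : Finset C) (f Fc : C → ℝ → ℝ≥0∞) (K : ℝ≥0∞) {ε : ℝ}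
    (hε0 : 0 < ε) (hε1 : ε ≤ 1/2)
    (hmeas : ∀ c ∈ F, Measurable (Fc c))
    (hdom : ∀ c ∈ F, ∀ h ∈ Set.Icc (0:ℝ) 1, ∀ h' ∈ Set.Icc (0:ℝ) 1,
      |h - h'| < ε → f c h' ≤ Fc c h)
    (hcov : ∀ h ∈ Set.Icc (0:ℝ) 1, K ≤ ∑ c ∈ F, f c h)
    (hface : ∀ c ∈ F, f c 0 = 0 ∨ f c 1 = 0) :
    (1 + ENNReal.ofReal (2*ε/3)) * K ≤ ∑ c ∈ F, ∫⁻ h in Set.Icc (0:ℝ) 1, Fc c h := by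
  classical
  set s₀ : ℝ := 2*ε/3 with hs₀def
  have hs₀pos : 0 < s₀ := by positivity
  have hs₀lt : s₀ < ε := by rw [hs₀def]; linarith
  have hs₀le1 : s₀ ≤ 1 := by rw [hs₀def]; linarith
  set L : Finset C := F.filter (fun c => f c 1 = 0) with hLdef
  set R : Finset C := F.filter (fun c => ¬ (f c 1 = 0)) with hRdef
  set u : ℝ → ℝ≥0∞ := fun h => ∑ c ∈ L, f c h with hudef
  set W : ℝ → Set ℝ := fun h => Set.Ioo (h - ε) (h + ε) ∩ Set.Icc 0 1 with hWdef
  set G : ℝ → ℝ≥0∞ := fun h => ⨆ y : W h, u ↑y with hGdef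
  set g : ℝ → ℝ≥0∞ := fun h => ⨅ y : W h, u ↑y with hgdef
  have hmemW : ∀ {a h : ℝ}, a ∈ W h ↔ ((h - ε < a ∧ a < h + ε) ∧ (0 ≤ a ∧ a ≤ 1)) := by
    intro a h
    simp [hWdef, Set.mem_Ioo, Set.mem_Icc, and_assoc]
  -- G is lower semicontinuous, g upper semicontinuous
  have hGmeas : Measurable G := by
    apply LowerSemicontinuous.measurable
    rw [lowerSemicontinuous_iff_isOpen_preimage]
    intro a
    have : G ⁻¹' Set.Ioi a =
        ⋃ (h' : ℝ) (_ : h' ∈ Set.Icc (0:ℝ) 1 ∧ a < u h'), Set.Ioo (h' - ε) (h' + ε) := by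
      ext h
      simp only [Set.mem_preimage, Set.mem_Ioi, Set.mem_iUnion, Set.mem_Ioo]
      constructor
      · intro hGh
        rw [hGdef] at hGh
        simp only [lt_iSup_iff] at hGh
        obtain ⟨⟨y, hy⟩, hya⟩ := hGh
        rw [hmemW] at hy
        exact ⟨y, ⟨⟨hy.2.1, hy.2.2⟩, hya⟩, by constructor <;> linarith [hy.1.1, hy.1.2]⟩
      · rintro ⟨y, ⟨hyIcc, hya⟩, hyIoo⟩
        have hyW : y ∈ W h := hmemW.2 ⟨⟨by linarith [hyIoo.1, hyIoo.2], by linarith [hyIoo.1, hyIoo.2]⟩, ⟨hyIcc.1, hyIcc.2⟩⟩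
        rw [hGdef]
        simp only [lt_iSup_iff]
        exact ⟨⟨y, hyW⟩, hya⟩
    rw [this]
    exact isOpen_iUnion fun h' => isOpen_iUnion fun _ => isOpen_Ioo
  have hgmeas : Measurable g := by
    apply UpperSemicontinuous.measurable
    rw [upperSemicontinuous_iff_isOpen_preimage]
    intro a
    have : g ⁻¹' Set.Iio a =
        ⋃ (h' : ℝ) (_ : h' ∈ Set.Icc (0:ℝ) 1 ∧ u h' < a), Set.Ioo (h' - ε) (h' + ε) := by
      ext h
      simp only [Set.mem_preimage, Set.mem_Iio, Set.mem_iUnion, Set.mem_Ioo]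
      constructor
      · intro hgh
        rw [hgdef] at hgh
        simp only [iInf_lt_iff] at hgh
        obtain ⟨⟨y, hy⟩, hya⟩ := hgh
        rw [hmemW] at hy
        exact ⟨y, ⟨⟨hy.2.1, hy.2.2⟩, hya⟩, by constructor <;> linarith [hy.1.1, hy.1.2]⟩
      · rintro ⟨y, ⟨hyIcc, hya⟩, hyIoo⟩
        have hyW : y ∈ W h := hmemW.2 ⟨⟨by linarith [hyIoo.1, hyIoo.2], by linarith [hyIoo.1, hyIoo.2]⟩, ⟨hyIcc.1, hyIcc.2⟩⟩
        rw [hgdef]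
        simp only [iInf_lt_iff]
        exact ⟨⟨y, hyW⟩, hya⟩
    rw [this]
    exact isOpen_iUnion fun h' => isOpen_iUnion fun _ => isOpen_Ioo
  -- pointwise bound
  have hWabs : ∀ {h a : ℝ}, a ∈ W h → (a ∈ Set.Icc (0:ℝ) 1 ∧ |h - a| < ε) := by
    intro h a ha
    rw [hmemW] at ha
    refine ⟨⟨ha.2.1, ha.2.2⟩, ?_⟩
    rw [abs_lt]
    constructor <;> linarith [ha.1.1, ha.1.2]
  have hpoint : ∀ h ∈ Set.Icc (0:ℝ) 1, G h + (K - g h) ≤ ∑ c ∈ F, Fc c h := by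
    intro h hh
    have hsplit : ∑ c ∈ L, Fc c h + ∑ c ∈ R, Fc c h = ∑ c ∈ F, Fc c h :=
      Finset.sum_filter_add_sum_filter_not F _ _
    have hGle : G h ≤ ∑ c ∈ L, Fc c h := by
      rw [hGdef]
      apply iSup_le
      rintro ⟨y, hy⟩
      obtain ⟨hyIcc, hyabs⟩ := hWabs hy
      exact Finset.sum_le_sum fun c hc =>
        hdom c (Finset.mem_filter.1 hc).1 h hh y hyIcc hyabs
    have hgle : K - g h ≤ ∑ c ∈ R, Fc c h := by
      rw [hgdef, ENNReal.sub_iInf]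
      apply iSup_le
      rintro ⟨y, hy⟩
      obtain ⟨hyIcc, hyabs⟩ := hWabs hy
      rw [tsub_le_iff_right]
      calc K ≤ ∑ c ∈ F, f c y := hcov y hyIcc
        _ = ∑ c ∈ L, f c y + ∑ c ∈ R, f c y :=
          (Finset.sum_filter_add_sum_filter_not F _ _).symm
        _ ≤ ∑ c ∈ R, Fc c h + u y := by
          rw [add_comm]
          gcongr with c hc
          exact hdom c (Finset.mem_filter.1 hc).1 h hh y hyIcc hyabs
    calc G h + (K - g h) ≤ ∑ c ∈ L, Fc c h + ∑ c ∈ R, Fc c h := add_le_add hGle hgle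
      _ = _ := hsplit
  -- G is at least K near 0
  have hG0 : ∀ h ∈ Set.Ico (0:ℝ) s₀, K ≤ G h := by
    intro h hh
    have h0W : (0:ℝ) ∈ W h := by
      rw [hmemW]
      refine ⟨⟨by linarith [hh.1, hh.2], by linarith [hh.1]⟩, le_refl _, by norm_num⟩
    have hKu0 : K ≤ u 0 := by
      have : ∑ c ∈ R, f c 0 = 0 := by
        apply Finset.sum_eq_zero
        intro c hc
        rcases hface c (Finset.mem_filter.1 hc).1 with h0 | h1
        · exact h0
        · exact absurd h1 (Finset.mem_filter.1 hc).2
      calc K ≤ ∑ c ∈ F, f c 0 := hcov 0 (by norm_num)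
        _ = ∑ c ∈ L, f c 0 + ∑ c ∈ R, f c 0 :=
          (Finset.sum_filter_add_sum_filter_not F _ _).symm
        _ = u 0 := by rw [this, add_zero]
    exact hKu0.trans (le_iSup (fun y : W h => u ↑y) ⟨0, h0W⟩)
  -- g vanishes near 1
  have hg1 : ∀ h ∈ Set.Ioc (1 - s₀) 1, g h = 0 := by
    intro h hh
    have h1W : (1:ℝ) ∈ W h := by
      rw [hmemW]
      refine ⟨⟨by linarith [hh.2], by linarith [hh.1]⟩, by norm_num, le_refl _⟩
    have hu1 : u 1 = 0 := by
      apply Finset.sum_eq_zero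
      intro c hc
      exact (Finset.mem_filter.1 hc).2
    refine le_antisymm ?_ zero_le
    calc g h ≤ u 1 := iInf_le (fun y : W h => u ↑y) ⟨1, h1W⟩
      _ = 0 := hu1
  -- shift bound
  have hshift : ∀ h ∈ Set.Icc s₀ 1, g (h - s₀) ≤ G h := by
    intro h hh
    simp only [Set.mem_Icc, hs₀def] at hh
    have hyW1 : (h - ε/3) ∈ W h := by
      rw [hmemW]
      exact ⟨⟨by linarith [hh.1], by linarith [hh.2]⟩, by linarith [hh.1], by linarith [hh.2]⟩
    have hyW2 : (h - ε/3) ∈ W (h - s₀) := by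
      rw [hmemW, hs₀def]
      exact ⟨⟨by linarith [hh.1], by linarith [hh.2]⟩, by linarith [hh.1], by linarith [hh.2]⟩
    calc g (h - s₀) ≤ u (h - ε/3) := iInf_le (fun y : W (h - s₀) => u ↑y) ⟨h - ε/3, hyW2⟩
      _ ≤ G h := le_iSup (fun y : W h => u ↑y) ⟨h - ε/3, hyW1⟩
  -- now integrate
  have hsum_eq : ∑ c ∈ F, ∫⁻ h in Set.Icc (0:ℝ) 1, Fc c h
      = ∫⁻ h in Set.Icc (0:ℝ) 1, ∑ c ∈ F, Fc c h :=
    (lintegral_finset_sum F hmeas).symm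
  have hstep1 : ∫⁻ h in Set.Icc (0:ℝ) 1, (G h + (K - g h))
      ≤ ∫⁻ h in Set.Icc (0:ℝ) 1, ∑ c ∈ F, Fc c h := by
    apply lintegral_mono_ae
    filter_upwards [ae_restrict_mem measurableSet_Icc] with h hh
    exact hpoint h hh
  have hadd : ∫⁻ h in Set.Icc (0:ℝ) 1, (G h + (K - g h))
      = (∫⁻ h in Set.Icc (0:ℝ) 1, G h) + ∫⁻ h in Set.Icc (0:ℝ) 1, (K - g h) :=
    lintegral_add_left hGmeas _
  -- lower bound on ∫ G
  have hGsplit : ∫⁻ h in Set.Icc (0:ℝ) 1, G h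
      = (∫⁻ h in Set.Ico (0:ℝ) s₀, G h) + ∫⁻ h in Set.Icc s₀ 1, G h := by
    rw [← Set.Ico_union_Icc_eq_Icc (le_of_lt hs₀pos) hs₀le1]
    exact lintegral_union measurableSet_Icc
      (by
        rw [Set.disjoint_left]
        rintro a ⟨_, ha2⟩ ⟨ha3, _⟩
        exact absurd ha3 (not_le.2 ha2))
  have hGpart1 : K * ENNReal.ofReal s₀ ≤ ∫⁻ h in Set.Ico (0:ℝ) s₀, G h := by
    have : ∫⁻ _ in Set.Ico (0:ℝ) s₀, K = K * ENNReal.ofReal s₀ := by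
      rw [setLIntegral_const, Real.volume_Ico, sub_zero]
    rw [← this]
    apply lintegral_mono_ae
    filter_upwards [ae_restrict_mem measurableSet_Ico] with h hh
    exact hG0 h hh
  have hGpart2 : ∫⁻ h in Set.Icc (0:ℝ) 1, g h ≤ ∫⁻ h in Set.Icc s₀ 1, G h := by
    have h1 : ∫⁻ h in Set.Icc s₀ 1, g (h - s₀) ≤ ∫⁻ h in Set.Icc s₀ 1, G h := by
      apply lintegral_mono_ae
      filter_upwards [ae_restrict_mem measurableSet_Icc] with h hh
      exact hshift h hh
    have h2 : ∫⁻ h in Set.Icc s₀ 1, g (h - s₀) = ∫⁻ h in Set.Icc 0 (1 - s₀), g h := by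
      rw [← lintegral_indicator measurableSet_Icc, ← lintegral_indicator measurableSet_Icc]
      have : (Set.Icc s₀ 1).indicator (fun h => g (h - s₀))
          = fun h => (Set.Icc (0:ℝ) (1 - s₀)).indicator g (h - s₀) := by
        funext h
        by_cases hmem : h ∈ Set.Icc s₀ 1
        · rw [Set.indicator_of_mem hmem, Set.indicator_of_mem
            (by constructor <;> [linarith [hmem.1]; linarith [hmem.2]] : h - s₀ ∈ Set.Icc (0:ℝ) (1-s₀))]
        · rw [Set.indicator_of_notMem hmem, Set.indicator_of_notMem]
          intro hc
          exact hmem ⟨by linarith [hc.1], by linarith [hc.2]⟩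
      rw [this]
      exact lintegral_sub_right_eq_self (fun h => (Set.Icc (0:ℝ) (1 - s₀)).indicator g h) s₀
    have h3 : ∫⁻ h in Set.Icc (0:ℝ) 1, g h = ∫⁻ h in Set.Icc (0:ℝ) (1 - s₀), g h := by
      rw [← Set.Icc_union_Ioc_eq_Icc (by linarith : (0:ℝ) ≤ 1 - s₀) (by linarith : (1:ℝ) - s₀ ≤ 1)]
      rw [lintegral_union measurableSet_Ioc
        (by
          rw [Set.disjoint_left]
          rintro a ⟨_, ha2⟩ ⟨ha3, _⟩
          exact absurd ha3 (not_lt.2 ha2))]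
      have : ∫⁻ h in Set.Ioc (1 - s₀) 1, g h = 0 := by
        have : ∫⁻ h in Set.Ioc (1 - s₀) 1, g h ≤ ∫⁻ _ in Set.Ioc (1 - s₀) 1, (0:ℝ≥0∞) := by
          apply lintegral_mono_ae
          filter_upwards [ae_restrict_mem measurableSet_Ioc] with h hh
          exact le_of_eq (hg1 h hh)
        simpa using this
      rw [this, add_zero]
    rw [h3, ← h2]
    exact h1
  -- lower bound on ∫ (K - g)
  have hKg : K - ∫⁻ h in Set.Icc (0:ℝ) 1, g h ≤ ∫⁻ h in Set.Icc (0:ℝ) 1, (K - g h) := by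
    rw [tsub_le_iff_right]
    calc K = ∫⁻ _ in Set.Icc (0:ℝ) 1, K := by
          rw [setLIntegral_const, Real.volume_Icc, sub_zero, ENNReal.ofReal_one, mul_one]
      _ ≤ ∫⁻ h in Set.Icc (0:ℝ) 1, ((K - g h) + g h) :=
          lintegral_mono fun h => le_tsub_add
      _ = (∫⁻ h in Set.Icc (0:ℝ) 1, (K - g h)) + ∫⁻ h in Set.Icc (0:ℝ) 1, g h :=
          lintegral_add_left (measurable_const.sub hgmeas) _
  -- final assembly
  have final : (1 + ENNReal.ofReal s₀) * K ≤ ∑ c ∈ F, ∫⁻ h in Set.Icc (0:ℝ) 1, Fc c h := by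
    rw [hsum_eq]
    calc (1 + ENNReal.ofReal s₀) * K = K * ENNReal.ofReal s₀ + K := by ring
      _ ≤ K * ENNReal.ofReal s₀ + ((∫⁻ h in Set.Icc (0:ℝ) 1, g h) + (K - ∫⁻ h in Set.Icc (0:ℝ) 1, g h)) := by
          gcongr
          exact le_add_tsub
      _ = (K * ENNReal.ofReal s₀ + ∫⁻ h in Set.Icc (0:ℝ) 1, g h) + (K - ∫⁻ h in Set.Icc (0:ℝ) 1, g h) := by ring
      _ ≤ (∫⁻ h in Set.Icc (0:ℝ) 1, G h) + ∫⁻ h in Set.Icc (0:ℝ) 1, (K - g h) := by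
          exact add_le_add (by rw [hGsplit]; exact add_le_add hGpart1 hGpart2) hKg
      _ = ∫⁻ h in Set.Icc (0:ℝ) 1, (G h + (K - g h)) := hadd.symm
      _ ≤ _ := hstep1
  exact final

lemma main_ind {C : Type*} {ε : ℝ} (hε0 : 0 < ε) (hε1 : ε ≤ 1/2) {d : ℕ}
    (F : Finset C) (s : Finset (Fin d)) :
    ∀ (T : C → Set (Fin d → ℝ)) (p : Fin d → ℝ),
    (∀ z : Fin d → ℝ, (∀ i ∈ s, z i ∈ Set.Icc (0:ℝ) 1) → (∀ i ∉ s, z i = p i) →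
      ∃ c ∈ F, z ∈ T c) →
    (∀ c ∈ F, ∀ i ∈ s, (∀ x ∈ T c, x i ≠ 0) ∨ (∀ x ∈ T c, x i ≠ 1)) →
    (1 + ENNReal.ofReal (2*ε/3)) ^ s.card ≤
      ∑ c ∈ F, (∫⋯∫⁻_s, ((Metric.thickening ε (T c) ∩
        (↑s : Set (Fin d)).pi (fun _ => Set.Icc (0:ℝ) 1)).indicator 1)) p := by
  classical
  induction s using Finset.induction_on with
  | empty =>
    intro T p hcov _
    obtain ⟨c, hcF, hcT⟩ := hcov p (fun i hi => absurd hi (Finset.notMem_empty i))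
      (fun _ _ => rfl)
    have hpmem : p ∈ Metric.thickening ε (T c) :=
      Metric.mem_thickening_iff.2 ⟨p, hcT, by simpa [dist_self] using hε0⟩
    simp only [Finset.card_empty, pow_zero, lmarginal_empty, Finset.coe_empty,
      Set.empty_pi, Set.inter_univ]
    calc (1:ℝ≥0∞) = (Metric.thickening ε (T c)).indicator 1 p := by
          rw [Set.indicator_of_mem hpmem]; rfl
      _ ≤ _ := Finset.single_le_sum (f := fun c => (Metric.thickening ε (T c)).indicator 1 p)
          (fun c _ => zero_le) hcF
  | @insert i s hi ih =>
    intro T p hcov hfc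
    set x₀ : ℝ≥0∞ := ENNReal.ofReal (2*ε/3) with hx₀
    set K : ℝ≥0∞ := (1 + x₀) ^ s.card with hK
    set Dc : C → Set (Fin d → ℝ) := fun c => Metric.thickening ε (T c) ∩
      (↑s : Set (Fin d)).pi (fun _ => Set.Icc (0:ℝ) 1) with hDc
    have hDm : ∀ c, MeasurableSet (Dc c) := fun c =>
      (Metric.isOpen_thickening.measurableSet).inter
        (MeasurableSet.pi (Set.to_countable _) (fun _ _ => measurableSet_Icc))
    set Fc : C → ℝ → ℝ≥0∞ := fun c h =>
      (∫⋯∫⁻_s, ((Dc c).indicator 1)) (Function.update p i h) with hFc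
    set f : C → ℝ → ℝ≥0∞ := fun c h' =>
      (∫⋯∫⁻_s, ((Metric.thickening ε {x ∈ T c | x i = h'} ∩
        (↑s : Set (Fin d)).pi (fun _ => Set.Icc (0:ℝ) 1)).indicator 1))
        (Function.update p i h') with hf
    -- coordinates of updateFinset points
    have hcoord : ∀ (a : ℝ) (y : (j : {x // x ∈ s}) → ℝ) (j : Fin d), j ≠ i →
        Function.updateFinset (Function.update p i a) s y j
          = Function.updateFinset p s y j := by
      intro a y j hj
      by_cases hjs : j ∈ s <;>
        simp [Function.updateFinset, hjs, Function.update_of_ne hj]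
    have hcoordi : ∀ (a : ℝ) (y : (j : {x // x ∈ s}) → ℝ),
        Function.updateFinset (Function.update p i a) s y i = a := by
      intro a y
      simp [Function.updateFinset, hi]
    -- measurability
    have hmeas : ∀ c ∈ F, Measurable (Fc c) := by
      intro c _
      exact (Measurable.lmarginal (fun _ => volume)
        (measurable_one.indicator (hDm c))).comp (measurable_update p)
    -- domination
    have hdom : ∀ c ∈ F, ∀ h ∈ Set.Icc (0:ℝ) 1, ∀ h' ∈ Set.Icc (0:ℝ) 1,
        |h - h'| < ε → f c h' ≤ Fc c h := by
      intro c _ h _ h' _ habs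
      rw [hf, hFc]
      simp only [lmarginal]
      apply lintegral_mono
      intro y
      by_cases hmem : Function.updateFinset (Function.update p i h') s y ∈
          Metric.thickening ε {x ∈ T c | x i = h'} ∩
          (↑s : Set (Fin d)).pi (fun _ => Set.Icc (0:ℝ) 1)
      · have hzmem : Function.updateFinset (Function.update p i h) s y ∈ Dc c := by
          obtain ⟨hthick, hbox⟩ := hmem
          obtain ⟨x, hx, hdist⟩ := Metric.mem_thickening_iff.1 hthick
          obtain ⟨hxT, hxi⟩ := hx
          constructor
          · apply Metric.mem_thickening_iff.2
            refine ⟨x, hxT, ?_⟩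
            rw [dist_pi_lt_iff hε0]
            intro j
            by_cases hji : j = i
            · rw [hji, hcoordi, hxi, Real.dist_eq]
              exact habs
            · rw [hcoord h y j hji, ← hcoord h' y j hji]
              exact lt_of_le_of_lt
                (dist_le_pi_dist (Function.updateFinset (Function.update p i h') s y) x j) hdist
          · intro j hjs
            have hji : j ≠ i := fun hji => hi (hji ▸ hjs)
            rw [hcoord h y j hji, ← hcoord h' y j hji]
            exact hbox j hjs
        simp only [Set.indicator_apply]
        rw [if_pos hmem, if_pos hzmem]
        exact le_rfl
      · simp only [Set.indicator_apply]
        rw [if_neg hmem]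
        exact zero_le
    -- coverage via induction hypothesis
    have hcov' : ∀ h' ∈ Set.Icc (0:ℝ) 1, K ≤ ∑ c ∈ F, f c h' := by
      intro h' hIcc
      apply ih (fun c => {x ∈ T c | x i = h'}) (Function.update p i h')
      · intro z h1 h2
        have hzi : z i = h' := by rw [h2 i hi, Function.update_self]
        obtain ⟨c, hcF, hcT⟩ := hcov z
          (by
            intro j hj
            rcases Finset.mem_insert.1 hj with hji | hjs
            · subst hji; rw [hzi]; exact hIcc
            · exact h1 j hjs)
          (by
            intro j hj
            have hji : j ≠ i := fun e => hj (e ▸ Finset.mem_insert_self i s)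
            have hjs : j ∉ s := fun e => hj (Finset.mem_insert_of_mem e)
            rw [h2 j hjs, Function.update_of_ne hji])
        exact ⟨c, hcF, hcT, hzi⟩
      · intro c hc j hjs
        rcases hfc c hc j (Finset.mem_insert_of_mem hjs) with h0 | h1
        · exact Or.inl (fun x hx => h0 x hx.1)
        · exact Or.inr (fun x hx => h1 x hx.1)
    -- face condition
    have hface' : ∀ c ∈ F, f c 0 = 0 ∨ f c 1 = 0 := by
      intro c hc
      have hempty : ∀ (a : ℝ), (∀ x ∈ T c, x i ≠ a) → f c a = 0 := by
        intro a ha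
        have : {x ∈ T c | x i = a} = (∅ : Set (Fin d → ℝ)) := by
          ext x
          simp only [Set.mem_sep_iff, Set.mem_empty_iff_false, iff_false, not_and]
          exact ha x
        rw [hf]
        simp only [this, Metric.thickening_empty, Set.empty_inter,
          Set.indicator_empty, lmarginal]
        simp [lintegral_zero]
      rcases hfc c hc i (Finset.mem_insert_self i s) with h0 | h1
      · exact Or.inl (hempty 0 h0)
      · exact Or.inr (hempty 1 h1)
    -- rewrite goal via lmarginal_insert
    have hψ : ∀ c ∈ F,
        (∫⋯∫⁻_insert i s, ((Metric.thickening ε (T c) ∩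
          (↑(insert i s) : Set (Fin d)).pi (fun _ => Set.Icc (0:ℝ) 1)).indicator 1)) p
        = ∫⁻ h in Set.Icc (0:ℝ) 1, Fc c h := by
      intro c _
      have hmeasf : Measurable (((Metric.thickening ε (T c) ∩
          (↑(insert i s) : Set (Fin d)).pi (fun _ => Set.Icc (0:ℝ) 1))).indicator
          (1 : (Fin d → ℝ) → ℝ≥0∞)) :=
        measurable_one.indicator ((Metric.isOpen_thickening.measurableSet).inter
          (MeasurableSet.pi (Set.to_countable _) (fun _ _ => measurableSet_Icc)))
      rw [lmarginal_insert _ hmeasf hi p, ← lintegral_indicator measurableSet_Icc]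
      apply lintegral_congr
      intro h
      have hsetins : (↑(insert i s) : Set (Fin d)).pi (fun _ => Set.Icc (0:ℝ) 1)
          = (fun z : Fin d → ℝ => z i) ⁻¹' (Set.Icc (0:ℝ) 1) ∩
            (↑s : Set (Fin d)).pi (fun _ => Set.Icc (0:ℝ) 1) := by
        rw [Finset.coe_insert, Set.insert_pi]
      by_cases hmem : h ∈ Set.Icc (0:ℝ) 1
      · rw [Set.indicator_of_mem hmem]
        rw [hFc]
        simp only [lmarginal]
        apply lintegral_congr
        intro y
        have hzi := hcoordi h y
        by_cases hzmem : Function.updateFinset (Function.update p i h) s y ∈ Dc c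
        · have h2 : Function.updateFinset (Function.update p i h) s y ∈
              Metric.thickening ε (T c) ∩
              (↑(insert i s) : Set (Fin d)).pi (fun _ => Set.Icc (0:ℝ) 1) := by
            refine ⟨hzmem.1, ?_⟩
            rw [hsetins]
            refine ⟨?_, hzmem.2⟩
            show Function.updateFinset (Function.update p i h) s y i ∈ Set.Icc (0:ℝ) 1
            rw [hzi]; exact hmem
          simp only [Set.indicator_apply]
          rw [if_pos h2, if_pos hzmem]
        · have h2 : Function.updateFinset (Function.update p i h) s y ∉
              Metric.thickening ε (T c) ∩
              (↑(insert i s) : Set (Fin d)).pi (fun _ => Set.Icc (0:ℝ) 1) := by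
            rintro ⟨ha, hb⟩
            rw [hsetins] at hb
            exact hzmem ⟨ha, hb.2⟩
          simp only [Set.indicator_apply]
          rw [if_neg h2, if_neg hzmem]
      · rw [Set.indicator_of_notMem hmem]
        simp only [lmarginal]
        have : ∀ (y : (j : {x // x ∈ s}) → ℝ),
            ((Metric.thickening ε (T c) ∩
              (↑(insert i s) : Set (Fin d)).pi (fun _ => Set.Icc (0:ℝ) 1)).indicator
              (1 : (Fin d → ℝ) → ℝ≥0∞))
              (Function.updateFinset (Function.update p i h) s y) = 0 := by
          intro y
          apply Set.indicator_of_notMem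
          rw [hsetins]
          rintro ⟨-, h2, -⟩
          simp only [Set.mem_preimage] at h2
          rw [hcoordi h y] at h2
          exact hmem h2
        simp only [this]
        exact lintegral_zero
    rw [Finset.card_insert_of_notMem hi, pow_succ]
    calc (1 + x₀) ^ s.card * (1 + x₀) = (1 + x₀) * K := mul_comm _ _
      _ ≤ ∑ c ∈ F, ∫⁻ h in Set.Icc (0:ℝ) 1, Fc c h :=
        step_core F f Fc K hε0 hε1 hmeas hdom hcov' hface'
      _ = _ := Finset.sum_congr rfl (fun c hc => (hψ c hc).symm)

/-- Neighborhood Sperner/KKM/Lebesgue lemma: given a coloring `χ` of the unit cube `[0,1]^d`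
(modeled inside `Fin d → ℝ` with the ℓ∞ norm) in which no color class contains points of
opposite faces, for any `ε ∈ (0, 1/2]` there is a point `p` of the cube whose open ℓ∞ ball of
radius `ε` contains points of at least `(1 + (2/3)ε)^d` different colors. -/
theorem neighborhood_sperner
    (d : ℕ) (hd : 0 < d) (C : Type*) (χ : (Fin d → ℝ) → C)
    (hface : ∀ (c : C) (i : Fin d),
      ¬((∃ x ∈ Set.Icc (0 : Fin d → ℝ) 1, χ x = c ∧ x i = 0) ∧
        (∃ x ∈ Set.Icc (0 : Fin d → ℝ) 1, χ x = c ∧ x i = 1)))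
    (ε : ℝ) (hε0 : 0 < ε) (hε1 : ε ≤ 1 / 2) :
    ∃ p ∈ Set.Icc (0 : Fin d → ℝ) 1, ∃ 𝒮 : Finset C,
      (1 + (2 / 3) * ε) ^ d ≤ (𝒮.card : ℝ) ∧
      ∀ c ∈ 𝒮, ∃ x ∈ Metric.ball p ε ∩ Set.Icc (0 : Fin d → ℝ) 1, χ x = c := by
  classical
  set B : ℝ := (1 + (2 / 3) * ε) ^ d with hB
  have hBpos : 0 < B := by positivity
  set T : C → Set (Fin d → ℝ) := fun c => {x | χ x = c} ∩ Set.Icc 0 1 with hT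
  set U : C → Set (Fin d → ℝ) := fun c => Metric.thickening ε (T c) with hU
  have hUm : ∀ c, MeasurableSet (U c) := fun c => Metric.isOpen_thickening.measurableSet
  have hvol1 : volume (Set.Icc (0 : Fin d → ℝ) 1) = 1 := by
    rw [← Set.pi_univ_Icc, volume_pi, Measure.pi_pi]
    simp [Real.volume_Icc]
  -- key sum bound
  have key : ∃ G : Finset C, ENNReal.ofReal B ≤ ∑ c ∈ G, volume (U c ∩ Set.Icc 0 1) := by
    by_cases hfin : (χ '' (Set.Icc (0 : Fin d → ℝ) 1)).Finite
    · refine ⟨hfin.toFinset, ?_⟩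
      have hcov : ∀ z : Fin d → ℝ, (∀ i ∈ (Finset.univ : Finset (Fin d)), z i ∈ Set.Icc (0:ℝ) 1) →
          (∀ i ∉ (Finset.univ : Finset (Fin d)), z i = (0 : Fin d → ℝ) i) →
          ∃ c ∈ hfin.toFinset, z ∈ T c := by
        intro z h1 _
        have hz : z ∈ Set.Icc (0 : Fin d → ℝ) 1 := by
          rw [← Set.pi_univ_Icc]
          exact Set.mem_univ_pi.2 fun i => h1 i (Finset.mem_univ i)
        exact ⟨χ z, hfin.mem_toFinset.2 ⟨z, hz, rfl⟩, rfl, hz⟩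
      have hfc : ∀ c ∈ hfin.toFinset, ∀ i ∈ (Finset.univ : Finset (Fin d)),
          (∀ x ∈ T c, x i ≠ 0) ∨ (∀ x ∈ T c, x i ≠ 1) := by
        intro c _ i _
        by_contra hcon
        push_neg at hcon
        obtain ⟨⟨x1, hx1, hx1i⟩, ⟨x2, hx2, hx2i⟩⟩ := hcon
        exact hface c i ⟨⟨x1, hx1.2, hx1.1, hx1i⟩, ⟨x2, hx2.2, hx2.1, hx2i⟩⟩
      have hmain := main_ind hε0 hε1 hfin.toFinset Finset.univ T 0 hcov hfc
      have hBeq : ENNReal.ofReal B = (1 + ENNReal.ofReal (2*ε/3)) ^ d := by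
        rw [hB, ENNReal.ofReal_pow (by positivity)]
        congr 1
        have : (1 + 2 / 3 * ε) = 1 + 2 * ε / 3 := by ring
        rw [this, ENNReal.ofReal_add zero_le_one (by positivity), ENNReal.ofReal_one]
      rw [hBeq]
      have hcard : (Finset.univ : Finset (Fin d)).card = d := by simp
      rw [hcard] at hmain
      refine le_trans hmain (le_of_eq (Finset.sum_congr rfl fun c _ => ?_))
      rw [lmarginal_univ]
      have hpi : ((↑(Finset.univ : Finset (Fin d)) : Set (Fin d)).pi
          (fun _ => Set.Icc (0:ℝ) 1)) = Set.Icc (0 : Fin d → ℝ) 1 := by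
        rw [Finset.coe_univ]
        exact Set.pi_univ_Icc 0 1
      rw [hpi, ← volume_pi]
      rw [lintegral_indicator_one ((hUm c).inter measurableSet_Icc)]
    · have hinf : (χ '' (Set.Icc (0 : Fin d → ℝ) 1)).Infinite := hfin
      set n : ℕ := ⌈B / ε ^ d⌉₊ with hn
      obtain ⟨G, hGsub, hGcard⟩ := hinf.exists_subset_card_eq n
      refine ⟨G, ?_⟩
      have hper : ∀ c ∈ G, ENNReal.ofReal (ε ^ d) ≤ volume (U c ∩ Set.Icc 0 1) := by
        intro c hc
        obtain ⟨x, hxIcc, hxχ⟩ := hGsub hc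
        have hx0 : ∀ j, 0 ≤ x j := fun j => hxIcc.1 j
        have hx1' : ∀ j, x j ≤ 1 := fun j => hxIcc.2 j
        have hsub : Set.pi Set.univ (fun j => Set.Ioo (max (x j - ε) 0) (min (x j + ε) 1))
            ⊆ U c ∩ Set.Icc 0 1 := by
          intro z hz
          constructor
          · apply Metric.mem_thickening_iff.2
            refine ⟨x, ⟨hxχ, hxIcc⟩, ?_⟩
            rw [dist_pi_lt_iff hε0]
            intro j
            have hj := hz j (Set.mem_univ j)
            have hj1 : max (x j - ε) 0 < z j := hj.1
            have hj2 : z j < min (x j + ε) 1 := hj.2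
            rw [Real.dist_eq, abs_lt]
            constructor
            · have := lt_of_le_of_lt (le_max_left _ _) hj1; linarith
            · have := lt_of_lt_of_le hj2 (min_le_left _ _); linarith
          · rw [← Set.pi_univ_Icc]
            intro j _
            have hj := hz j (Set.mem_univ j)
            have hj1 : max (x j - ε) 0 < z j := hj.1
            have hj2 : z j < min (x j + ε) 1 := hj.2
            exact ⟨le_of_lt (lt_of_le_of_lt (le_max_right _ _) hj1),
              le_of_lt (lt_of_lt_of_le hj2 (min_le_right _ _))⟩
        refine le_trans ?_ (measure_mono hsub)
        rw [volume_pi, Measure.pi_pi]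
        have hlen : ∀ j : Fin d, ENNReal.ofReal ε ≤ volume (Set.Ioo (max (x j - ε) 0) (min (x j + ε) 1)) := by
          intro j
          rw [Real.volume_Ioo]
          apply ENNReal.ofReal_le_ofReal
          rcases le_total (x j + ε) 1 with h1 | h1 <;> rcases le_total 0 (x j - ε) with h2 | h2 <;>
            simp [min_eq_left, min_eq_right, max_eq_left, max_eq_right, h1, h2] <;>
            [linarith; linarith [hx0 j]; linarith [hx1' j]; linarith]
        calc ENNReal.ofReal (ε ^ d) = ENNReal.ofReal ε ^ d := ENNReal.ofReal_pow hε0.le d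
          _ = ∏ _j : Fin d, ENNReal.ofReal ε := by
              rw [Finset.prod_const, Finset.card_univ, Fintype.card_fin]
          _ ≤ ∏ j : Fin d, volume (Set.Ioo (max (x j - ε) 0) (min (x j + ε) 1)) :=
              Finset.prod_le_prod' fun j _ => hlen j
      calc ENNReal.ofReal B ≤ ENNReal.ofReal ((n : ℝ) * ε ^ d) := by
            apply ENNReal.ofReal_le_ofReal
            have h1 : B / ε ^ d ≤ (n : ℝ) := Nat.le_ceil _
            have h2 : (0:ℝ) < ε ^ d := by positivity
            calc B = (B / ε ^ d) * ε ^ d := by field_simp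
              _ ≤ (n : ℝ) * ε ^ d := mul_le_mul_of_nonneg_right h1 h2.le
        _ = (n : ℝ≥0∞) * ENNReal.ofReal (ε ^ d) := by
            rw [ENNReal.ofReal_mul (by positivity), ENNReal.ofReal_natCast]
        _ = ∑ _c ∈ G, ENNReal.ofReal (ε ^ d) := by
            rw [Finset.sum_const, hGcard, nsmul_eq_mul]
        _ ≤ ∑ c ∈ G, volume (U c ∩ Set.Icc 0 1) := Finset.sum_le_sum hper
  obtain ⟨G, hsum⟩ := key
  -- averaging
  set m : ℕ := ⌈B⌉₊ - 1 with hm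
  have hceil1 : 1 ≤ ⌈B⌉₊ := Nat.one_le_ceil_iff.2 hBpos
  have hmB : (m : ℝ) < B := by
    have h1 : (⌈B⌉₊ : ℝ) < B + 1 := Nat.ceil_lt_add_one hBpos.le
    have h2 : (m : ℝ) = (⌈B⌉₊ : ℝ) - 1 := by
      rw [hm, Nat.cast_sub hceil1, Nat.cast_one]
    linarith
  have hex : ∃ p ∈ Set.Icc (0 : Fin d → ℝ) 1,
      m + 1 ≤ (G.filter (fun c => p ∈ U c)).card := by
    by_contra hcon
    push_neg at hcon
    have hcount : ∀ p ∈ Set.Icc (0 : Fin d → ℝ) 1,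
        (∑ c ∈ G, (U c).indicator (1 : (Fin d → ℝ) → ℝ≥0∞) p) ≤ (m : ℝ≥0∞) := by
      intro p hp
      have hcard : (G.filter (fun c => p ∈ U c)).card ≤ m := by
        have := hcon p hp
        omega
      calc ∑ c ∈ G, (U c).indicator (1 : (Fin d → ℝ) → ℝ≥0∞) p
          = ∑ c ∈ G, (if p ∈ U c then (1:ℝ≥0∞) else 0) := by
            refine Finset.sum_congr rfl fun c _ => ?_
            simp [Set.indicator_apply]
        _ = ((G.filter (fun c => p ∈ U c)).card : ℝ≥0∞) := by
            rw [Finset.sum_ite, Finset.sum_const, Finset.sum_const_zero, add_zero,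
              nsmul_eq_mul, mul_one]
        _ ≤ (m : ℝ≥0∞) := by exact_mod_cast Nat.cast_le.2 hcard
    have hle : ∑ c ∈ G, volume (U c ∩ Set.Icc 0 1) ≤ (m : ℝ≥0∞) := by
      calc ∑ c ∈ G, volume (U c ∩ Set.Icc 0 1)
          = ∑ c ∈ G, ∫⁻ p in Set.Icc (0 : Fin d → ℝ) 1, (U c).indicator 1 p := by
            refine Finset.sum_congr rfl fun c _ => ?_
            rw [lintegral_indicator_one (hUm c), Measure.restrict_apply (hUm c)]
        _ = ∫⁻ p in Set.Icc (0 : Fin d → ℝ) 1, ∑ c ∈ G, (U c).indicator 1 p :=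
            (lintegral_finset_sum G fun c _ => measurable_one.indicator (hUm c)).symm
        _ ≤ ∫⁻ _ in Set.Icc (0 : Fin d → ℝ) 1, (m : ℝ≥0∞) := by
            apply lintegral_mono_ae
            filter_upwards [ae_restrict_mem measurableSet_Icc] with p hp
            exact hcount p hp
        _ = (m : ℝ≥0∞) := by rw [setLIntegral_const, hvol1, mul_one]
    have hBm : ENNReal.ofReal B ≤ (m : ℝ≥0∞) := le_trans hsum hle
    rw [← ENNReal.ofReal_natCast m] at hBm
    have := (ENNReal.ofReal_le_ofReal_iff (by positivity)).1 hBm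
    linarith
  obtain ⟨p, hpIcc, hpcard⟩ := hex
  refine ⟨p, hpIcc, G.filter (fun c => p ∈ U c), ?_, ?_⟩
  · have hm1 : m + 1 = ⌈B⌉₊ := by omega
    have h1 : (⌈B⌉₊ : ℝ) ≤ ((G.filter (fun c => p ∈ U c)).card : ℝ) := by
      exact_mod_cast hm1 ▸ hpcard
    exact le_trans (Nat.le_ceil B) h1
  · intro c hc
    obtain ⟨hcG, hpU⟩ := Finset.mem_filter.1 hc
    obtain ⟨x, hxT, hdist⟩ := Metric.mem_thickening_iff.1 hpU
    exact ⟨x, ⟨Metric.mem_ball.2 (by rw [dist_comm]; exact hdist), hxT.2⟩, hxT.1⟩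
end

section
/- Let d ∈ ℕ and let ‖·‖ be any norm on ℝ^d. Let A ⊆ ℝ^d be a bounded set with diameter D with respect to ‖·‖. Then the outer Lebesgue measure of A is at most the Lebesgue measure of a ball of radius D/2, i.e., m_out(A) ≤ (D/2)^d · m({x ∈ ℝ^d : ‖x‖ < 1}). -/
open MeasureTheory

set_option maxHeartbeats 1000000

section IsodiametricAux

open Set Pointwise ENNReal NNReal

lemma bm_compact (K L : Set ℝ) (hK : IsCompact K) (hL : IsCompact L)
    (hKne : K.Nonempty) (hLne : L.Nonempty) :
    volume K + volume L ≤ volume (K + L) := by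
  obtain ⟨a, haK, ha⟩ := hK.exists_isGreatest hKne
  obtain ⟨b, hbL, hb⟩ := hL.exists_isLeast hLne
  have hU : (b +ᵥ K) ⊆ K + L := by
    rintro x ⟨k, hk, rfl⟩
    exact ⟨k, hk, b, hbL, add_comm k b⟩
  have hV : (a +ᵥ L) ⊆ K + L := by
    rintro x ⟨l, hl, rfl⟩
    exact ⟨a, haK, l, hl, rfl⟩
  have hinter : (b +ᵥ K) ∩ (a +ᵥ L) ⊆ {a + b} := by
    rintro x ⟨⟨k, hk, rfl⟩, ⟨l, hl, hxl⟩⟩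
    have h1 : k ≤ a := ha hk
    have h2 : b ≤ l := hb hl
    simp only [vadd_eq_add] at hxl ⊢
    rw [mem_singleton_iff]
    linarith [hxl]
  have hmeas : volume ((b +ᵥ K) ∪ (a +ᵥ L)) = volume K + volume L := by
    have h0 : volume ((b +ᵥ K) ∩ (a +ᵥ L)) = 0 :=
      le_antisymm (le_trans (measure_mono hinter) (by simp)) zero_le
    have := measure_union_add_inter (μ := volume) (b +ᵥ K) (hL.measurableSet.const_vadd a)
    rw [h0, add_zero] at this
    rw [this, measure_vadd, measure_vadd]
  calc volume K + volume L = volume ((b +ᵥ K) ∪ (a +ᵥ L)) := hmeas.symm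
    _ ≤ volume (K + L) := measure_mono (union_subset hU hV)

lemma bm_one_dim (A B : Set ℝ) (hA : MeasurableSet A) (hB : MeasurableSet B)
    (hAne : A.Nonempty) (hBne : B.Nonempty) :
    volume A + volume B ≤ volume (A + B) := by
  rcases eq_top_or_lt_top (volume (A + B)) with htop | hfin
  · rw [htop]; exact le_top
  obtain ⟨a0, ha0⟩ := hAne
  obtain ⟨b0, hb0⟩ := hBne
  have hAfin : volume A ≠ ⊤ := by
    refine ne_top_of_le_ne_top hfin.ne (le_trans ?_ (measure_mono (?_ : (b0 +ᵥ A) ⊆ A + B)))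
    · rw [measure_vadd]
    · rintro x ⟨k, hk, rfl⟩; exact ⟨k, hk, b0, hb0, add_comm k b0⟩
  have hBfin : volume B ≠ ⊤ := by
    refine ne_top_of_le_ne_top hfin.ne (le_trans ?_ (measure_mono (?_ : (a0 +ᵥ B) ⊆ A + B)))
    · rw [measure_vadd]
    · rintro x ⟨l, hl, rfl⟩; exact ⟨a0, ha0, l, hl, rfl⟩
  apply ENNReal.le_of_forall_pos_le_add
  intro ε hε _
  have hε2 : ((ε:ℝ≥0∞) / 2) ≠ 0 := by
    simp [ENNReal.div_eq_zero_iff, hε.ne']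
  obtain ⟨K, hKA, hKc, hKm⟩ := hA.exists_isCompact_lt_add (μ := volume) hAfin hε2
  obtain ⟨L, hLB, hLc, hLm⟩ := hB.exists_isCompact_lt_add (μ := volume) hBfin hε2
  set K' : Set ℝ := K ∪ {a0}
  set L' : Set ℝ := L ∪ {b0}
  have hK'c : IsCompact K' := hKc.union isCompact_singleton
  have hL'c : IsCompact L' := hLc.union isCompact_singleton
  have hK'A : K' ⊆ A := union_subset hKA (by simpa using ha0)
  have hL'B : L' ⊆ B := union_subset hLB (by simpa using hb0)
  have key := bm_compact K' L' hK'c hL'c ⟨a0, by simp [K']⟩ ⟨b0, by simp [L']⟩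
  have h1 : volume A ≤ volume K' + ε / 2 :=
    le_trans hKm.le (add_le_add_left (measure_mono subset_union_left) _)
  have h2 : volume B ≤ volume L' + ε / 2 :=
    le_trans hLm.le (add_le_add_left (measure_mono subset_union_left) _)
  calc volume A + volume B ≤ (volume K' + volume L') + (ε / 2 + ε / 2) := by
        calc volume A + volume B ≤ (volume K' + ε/2) + (volume L' + ε/2) := add_le_add h1 h2
          _ = (volume K' + volume L') + (ε/2 + ε/2) := by ring
    _ ≤ volume (K' + L') + ε := by
        rw [ENNReal.add_halves]
        exact add_le_add_left key _
    _ ≤ volume (A + B) + ε :=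
        add_le_add_left (measure_mono (Set.add_subset_add hK'A hL'B)) _

lemma layercake_eq (u : ℝ → ℝ≥0∞) (hu : Measurable u) {c : ℝ≥0∞}
    (hc0 : c ≠ 0) (hcT : c ≠ ⊤) (hub : ∀ x, u x ≤ c) :
    ∫⁻ x, u x = c * ∫⁻ t in Set.Ioo (0:ℝ) 1, volume {x | ENNReal.ofReal t * c < u x} := by
  set R : ℝ := c.toReal with hR
  have hR0 : 0 < R := ENNReal.toReal_pos hc0 hcT
  set v : ℝ → ℝ := fun x => (u x).toReal with hv
  have hvm : Measurable v := hu.ennreal_toReal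
  have hvnn : ∀ x, 0 ≤ v x := fun x => ENNReal.toReal_nonneg
  have huv : ∀ x, u x = ENNReal.ofReal (v x) := fun x =>
    (ENNReal.ofReal_toReal (ne_top_of_le_ne_top hcT (hub x))).symm
  have hvR : ∀ x, v x ≤ R := fun x =>
    ENNReal.toReal_mono hcT (hub x)
  have key : ∫⁻ x, u x = ∫⁻ t in Ioi (0:ℝ), volume {x | t < v x} := by
    calc ∫⁻ x, u x = ∫⁻ x, ENNReal.ofReal (v x) := by simp_rw [huv]
      _ = ∫⁻ t in Ioi (0:ℝ), volume {x | t < v x} :=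
        lintegral_eq_lintegral_meas_lt volume (Filter.Eventually.of_forall hvnn) hvm.aemeasurable
  -- change of variables t = R * s
  have hmap : Measure.map (fun s : ℝ => R * s) volume = ENNReal.ofReal R⁻¹ • volume := by
    rw [Real.map_volume_mul_left (ne_of_gt hR0)]
    congr 1
    rw [abs_of_pos (inv_pos.mpr hR0)]
  have hF : Measurable fun t : ℝ => volume {x | t < v x} := by
    apply Antitone.measurable
    intro t1 t2 h12
    exact measure_mono (fun x hx => lt_of_le_of_lt h12 hx)
  have subst : ∫⁻ t in Ioi (0:ℝ), volume {x | t < v x}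
      = ENNReal.ofReal R * ∫⁻ s in Ioi (0:ℝ), volume {x | R * s < v x} := by
    have hpre : (fun s : ℝ => R * s) ⁻¹' (Ioi 0) = Ioi 0 := by
      ext s; simp only [Set.mem_preimage, Set.mem_Ioi]
      constructor <;> intro h <;> nlinarith
    have hmr : Measure.map (fun s : ℝ => R * s) ((volume : Measure ℝ).restrict (Ioi 0))
        = ENNReal.ofReal R⁻¹ • (volume : Measure ℝ).restrict (Ioi 0) := by
      rw [← hpre, ← Measure.restrict_map (measurable_const_mul R) measurableSet_Ioi, hmap,
        hpre, Measure.restrict_smul]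
    have h2 : ∫⁻ s in Ioi (0:ℝ), volume {x | R * s < v x}
        = ENNReal.ofReal R⁻¹ * ∫⁻ t in Ioi (0:ℝ), volume {x | t < v x} := by
      calc ∫⁻ s in Ioi (0:ℝ), volume {x | R * s < v x}
          = ∫⁻ t, volume {x | t < v x} ∂(Measure.map (fun s : ℝ => R * s)
              ((volume : Measure ℝ).restrict (Ioi 0))) :=
            (lintegral_map hF (measurable_const_mul R)).symm
        _ = ENNReal.ofReal R⁻¹ * ∫⁻ t in Ioi (0:ℝ), volume {x | t < v x} := by
            rw [hmr, lintegral_smul_measure, smul_eq_mul]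
    rw [h2, ← mul_assoc, ← ENNReal.ofReal_mul hR0.le, mul_inv_cancel₀ (ne_of_gt hR0),
      ENNReal.ofReal_one, one_mul]
  -- cut off at s = 1
  have cutoff : ∫⁻ s in Ioi (0:ℝ), volume {x | R * s < v x}
      = ∫⁻ s in Ioo (0:ℝ) 1, volume {x | R * s < v x} := by
    have hsplit : Ioi (0:ℝ) = Ioo (0:ℝ) 1 ∪ Ici (1:ℝ) := by
      ext s; simp only [mem_Ioi, mem_union, mem_Ioo, mem_Ici]
      constructor
      · intro hs; rcases lt_or_ge s 1 with h | h
        · exact Or.inl ⟨hs, h⟩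
        · exact Or.inr h
      · rintro (⟨h, _⟩ | h) <;> linarith
    have hdisj : Disjoint (Ioo (0:ℝ) 1) (Ici (1:ℝ)) := by
      rw [Set.disjoint_left]; rintro s ⟨_, h1⟩ h2; exact absurd h2 (not_le.mpr h1)
    rw [hsplit, lintegral_union measurableSet_Ici hdisj]
    have hzero : ∫⁻ s in Ici (1:ℝ), volume {x | R * s < v x} = 0 := by
      have hm2 : Measurable fun s : ℝ => volume {x | R * s < v x} :=
        hF.comp (measurable_const_mul R)
      rw [setLIntegral_eq_zero_iff measurableSet_Ici hm2]
      apply Filter.Eventually.of_forall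
      intro s hs
      have : {x | R * s < v x} = ∅ := by
        ext x; simp only [mem_setOf_eq, mem_empty_iff_false, iff_false, not_lt]
        calc v x ≤ R := hvR x
          _ ≤ R * s := le_mul_of_one_le_right hR0.le hs
      simp [this]
    rw [hzero, add_zero]
  -- identify level sets
  have hsets : ∀ s ∈ Ioo (0:ℝ) 1,
      volume {x | R * s < v x} = volume {x | ENNReal.ofReal s * c < u x} := by
    intro s hs
    congr 1
    ext x
    simp only [mem_setOf_eq]
    rw [huv x, ← ENNReal.ofReal_toReal hcT, ← hR, ← ENNReal.ofReal_mul hs.1.le,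
      ENNReal.ofReal_lt_ofReal_iff_of_nonneg (mul_nonneg hs.1.le hR0.le), mul_comm s R]
  rw [key, subst, cutoff, setLIntegral_congr_fun measurableSet_Ioo
    hsets, hR, ENNReal.ofReal_toReal hcT]

lemma layercake_le (u : ℝ → ℝ≥0∞) (hu : Measurable u) {c : ℝ≥0∞}
    (hc0 : c ≠ 0) (hcT : c ≠ ⊤) :
    c * ∫⁻ t in Set.Ioo (0:ℝ) 1, volume {x | ENNReal.ofReal t * c < u x} ≤ ∫⁻ x, u x := by
  set u' : ℝ → ℝ≥0∞ := fun x => min (u x) c with hu'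
  have hu'm : Measurable u' := hu.min measurable_const
  have hkey := layercake_eq u' hu'm hc0 hcT (fun x => min_le_right _ _)
  have hsets : ∀ t ∈ Set.Ioo (0:ℝ) 1,
      volume {x | ENNReal.ofReal t * c < u' x} = volume {x | ENNReal.ofReal t * c < u x} := by
    intro t ht
    congr 1
    ext x
    simp only [Set.mem_setOf_eq, hu', lt_min_iff]
    have htc : ENNReal.ofReal t * c < c := by
      calc ENNReal.ofReal t * c < 1 * c := by
            exact ENNReal.mul_lt_mul_left hc0 hcT (ENNReal.ofReal_lt_one.mpr ht.2)
        _ = c := one_mul c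
    tauto
  rw [← setLIntegral_congr_fun measurableSet_Ioo hsets, ← hkey]
  exact lintegral_mono fun x => min_le_left _ _

lemma four_mul_le_sq_add' (a b : ℝ≥0∞) : 4 * (a * b) ≤ (a + b) ^ 2 := by
  rcases eq_or_ne a ⊤ with rfl | ha
  · rcases eq_or_ne b 0 with rfl | hb
    · simp
    · have : (⊤ + b : ℝ≥0∞) ^ 2 = ⊤ := by simp [pow_two]
      rw [this]; exact le_top
  rcases eq_or_ne b ⊤ with rfl | hb
  · rcases eq_or_ne a 0 with rfl | ha0
    · simp
    · have : (a + ⊤ : ℝ≥0∞) ^ 2 = ⊤ := by simp [pow_two]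
      rw [this]; exact le_top
  lift a to ℝ≥0 using ha
  lift b to ℝ≥0 using hb
  rw [← ENNReal.coe_add, ← ENNReal.coe_mul, ← ENNReal.coe_pow, show (4 : ℝ≥0∞) = ((4 : ℝ≥0) : ℝ≥0∞) by norm_num,
    ← ENNReal.coe_mul, ENNReal.coe_le_coe, ← NNReal.coe_le_coe]
  push_cast
  nlinarith [sq_nonneg ((a : ℝ) - (b : ℝ))]

lemma pl_dim1 (f g h : ℝ → ℝ≥0∞) (hf : Measurable f) (hg : Measurable g) (hh : Measurable h)
    {B : ℝ≥0∞} (hB : B ≠ ⊤) (hfB : ∀ x, f x ≤ B) (hgB : ∀ x, g x ≤ B)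
    (hyp : ∀ x y, f x * g y ≤ h ((x + y) / 2) ^ 2) :
    (∫⁻ x, f x) * (∫⁻ y, g y) ≤ (∫⁻ z, h z) ^ 2 := by
  set F := ⨆ x, f x with hF
  set G := ⨆ y, g y with hG
  have hFT : F ≠ ⊤ := ne_top_of_le_ne_top hB (iSup_le hfB)
  have hGT : G ≠ ⊤ := ne_top_of_le_ne_top hB (iSup_le hgB)
  rcases eq_or_ne F 0 with hF0 | hF0
  · have : ∀ x, f x = 0 := fun x => le_antisymm (hF0 ▸ le_iSup f x) zero_le
    simp [this]
  rcases eq_or_ne G 0 with hG0 | hG0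
  · have : ∀ y, g y = 0 := fun y => le_antisymm (hG0 ▸ le_iSup g y) zero_le
    simp [this]
  set c : ℝ≥0∞ := (F * G) ^ (2⁻¹ : ℝ) with hc
  have hFG0 : F * G ≠ 0 := mul_ne_zero hF0 hG0
  have hFGT : F * G ≠ ⊤ := ENNReal.mul_ne_top hFT hGT
  have hc0 : c ≠ 0 := by
    simp [hc, ENNReal.rpow_eq_zero_iff, hFG0, hFGT]
  have hcT : c ≠ ⊤ := by
    simp [hc, ENNReal.rpow_eq_top_iff, hFG0, hFGT]
  have hc2 : c ^ 2 = F * G := by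
    rw [hc, ← ENNReal.rpow_natCast ((F*G) ^ (2⁻¹:ℝ)) 2, ← ENNReal.rpow_mul]
    norm_num
  -- level sets
  set Sf : ℝ → Set ℝ := fun t => {x | ENNReal.ofReal t * F < f x} with hSf
  set Sg : ℝ → Set ℝ := fun t => {y | ENNReal.ofReal t * G < g y} with hSg
  have hSfm : ∀ t, MeasurableSet (Sf t) := fun t => hf measurableSet_Ioi
  have hSgm : ∀ t, MeasurableSet (Sg t) := fun t => hg measurableSet_Ioi
  have hSfne : ∀ t ∈ Ioo (0:ℝ) 1, (Sf t).Nonempty := by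
    intro t ht
    have : ENNReal.ofReal t * F < F := by
      calc ENNReal.ofReal t * F < 1 * F :=
        ENNReal.mul_lt_mul_left hF0 hFT (ENNReal.ofReal_lt_one.mpr ht.2)
        _ = F := one_mul F
    obtain ⟨x, hx⟩ := lt_iSup_iff.mp (hF ▸ this)
    exact ⟨x, hx⟩
  have hSgne : ∀ t ∈ Ioo (0:ℝ) 1, (Sg t).Nonempty := by
    intro t ht
    have : ENNReal.ofReal t * G < G := by
      calc ENNReal.ofReal t * G < 1 * G :=
        ENNReal.mul_lt_mul_left hG0 hGT (ENNReal.ofReal_lt_one.mpr ht.2)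
        _ = G := one_mul G
    obtain ⟨y, hy⟩ := lt_iSup_iff.mp (hG ▸ this)
    exact ⟨y, hy⟩
  -- key inclusion
  have hincl : ∀ t ∈ Ioo (0:ℝ) 1,
      (2⁻¹ : ℝ) • (Sf t + Sg t) ⊆ {z | ENNReal.ofReal t * c < h z} := by
    rintro t ht z ⟨w, ⟨x, hx, y, hy, rfl⟩, rfl⟩
    simp only [mem_setOf_eq]
    have hxy : (2⁻¹ : ℝ) • (x + y) = (x + y) / 2 := by
      simp [smul_eq_mul]; ring
    rw [hxy]
    by_contra hle
    push_neg at hle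
    have hsq : h ((x + y)/2) ^ 2 ≤ (ENNReal.ofReal t * c) ^ 2 := by gcongr
    have hlt : (ENNReal.ofReal t * c) ^ 2 < h ((x + y)/2) ^ 2 := by
      calc (ENNReal.ofReal t * c) ^ 2 = (ENNReal.ofReal t * F) * (ENNReal.ofReal t * G) := by
            rw [mul_pow, hc2]; ring
        _ < f x * g y := ENNReal.mul_lt_mul hx hy
        _ ≤ h ((x + y)/2) ^ 2 := hyp x y
    exact absurd (lt_of_lt_of_le hlt hsq) (lt_irrefl _)
  -- measure inequality at each level
  have hlevel : ∀ t ∈ Ioo (0:ℝ) 1,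
      ENNReal.ofReal 2⁻¹ * (volume (Sf t) + volume (Sg t)) ≤ volume {z | ENNReal.ofReal t * c < h z} := by
    intro t ht
    calc ENNReal.ofReal 2⁻¹ * (volume (Sf t) + volume (Sg t))
        ≤ ENNReal.ofReal 2⁻¹ * volume (Sf t + Sg t) := by
          gcongr
          exact bm_one_dim _ _ (hSfm t) (hSgm t) (hSfne t ht) (hSgne t ht)
      _ = volume ((2⁻¹ : ℝ) • (Sf t + Sg t)) := by
          rw [Measure.addHaar_smul]
          congr 2
          norm_num [Module.finrank_self, abs_of_pos]
      _ ≤ volume {z | ENNReal.ofReal t * c < h z} := measure_mono (hincl t ht)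
  -- integrate levels
  set P := ∫⁻ t in Ioo (0:ℝ) 1, volume (Sf t) with hP
  set Q := ∫⁻ t in Ioo (0:ℝ) 1, volume (Sg t) with hQ
  have hPm : Measurable fun t => volume (Sf t) := by
    apply Antitone.measurable
    intro t1 t2 h12
    exact measure_mono (fun x hx =>
      lt_of_le_of_lt (mul_le_mul_left (ENNReal.ofReal_le_ofReal h12) F) hx)
  have hQm : Measurable fun t => volume (Sg t) := by
    apply Antitone.measurable
    intro t1 t2 h12
    exact measure_mono (fun y hy =>
      lt_of_le_of_lt (mul_le_mul_left (ENNReal.ofReal_le_ofReal h12) G) hy)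
  have hint : ENNReal.ofReal 2⁻¹ * (P + Q)
      ≤ ∫⁻ t in Ioo (0:ℝ) 1, volume {z | ENNReal.ofReal t * c < h z} := by
    calc ENNReal.ofReal 2⁻¹ * (P + Q)
        = ∫⁻ t in Ioo (0:ℝ) 1, ENNReal.ofReal 2⁻¹ * (volume (Sf t) + volume (Sg t)) := by
          rw [lintegral_const_mul _ (f := fun t => volume (Sf t) + volume (Sg t)) ((hPm.add hQm)), lintegral_add_left hPm]
      _ ≤ ∫⁻ t in Ioo (0:ℝ) 1, volume {z | ENNReal.ofReal t * c < h z} := by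
          apply setLIntegral_mono' measurableSet_Ioo hlevel
  -- layercake
  have hfeq : ∫⁻ x, f x = F * P := layercake_eq f hf hF0 hFT (fun x => le_iSup f x)
  have hgeq : ∫⁻ y, g y = G * Q := layercake_eq g hg hG0 hGT (fun y => le_iSup g y)
  have hhge : c * ∫⁻ t in Ioo (0:ℝ) 1, volume {z | ENNReal.ofReal t * c < h z} ≤ ∫⁻ z, h z :=
    layercake_le h hh hc0 hcT
  -- conclude
  have hmain : c * (ENNReal.ofReal 2⁻¹ * (P + Q)) ≤ ∫⁻ z, h z :=
    le_trans (by gcongr) hhge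
  have hfinal : (∫⁻ x, f x) * (∫⁻ y, g y) ≤ (c * (ENNReal.ofReal 2⁻¹ * (P + Q))) ^ 2 := by
    have h1 : ENNReal.ofReal (2⁻¹:ℝ) = 2⁻¹ := by
      rw [ENNReal.ofReal_inv_of_pos (by norm_num : (0:ℝ) < 2)]
      norm_num
    have h4 : ((2:ℝ≥0∞)⁻¹)^2 * 4 = 1 := by
      rw [show ((2:ℝ≥0∞)⁻¹)^2 = 4⁻¹ by rw [← ENNReal.inv_pow]; norm_num]
      exact ENNReal.inv_mul_cancel (by norm_num) (by norm_num)
    calc (∫⁻ x, f x) * (∫⁻ y, g y) = (F * G) * (P * Q) := by rw [hfeq, hgeq]; ring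
      _ = c ^ 2 * (2⁻¹)^2 * (4 * (P * Q)) := by
          rw [hc2, ← one_mul (F * G * (P * Q)), ← h4]; ring
      _ ≤ c ^ 2 * (2⁻¹)^2 * (P + Q) ^ 2 := by gcongr; exact four_mul_le_sq_add' P Q
      _ = (c * (ENNReal.ofReal 2⁻¹ * (P + Q))) ^ 2 := by rw [h1]; ring
  calc (∫⁻ x, f x) * (∫⁻ y, g y) ≤ (c * (ENNReal.ofReal 2⁻¹ * (P + Q))) ^ 2 := hfinal
    _ ≤ (∫⁻ z, h z) ^ 2 := by gcongr

/-- The box `[-R, R]^n`. -/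
def Box (n : ℕ) (R : ℝ) : Set (Fin n → ℝ) := Set.univ.pi (fun _ => Icc (-R) R)

lemma Box_measurable (n : ℕ) (R : ℝ) : MeasurableSet (Box n R) :=
  MeasurableSet.univ_pi fun _ => measurableSet_Icc

lemma Box_volume_ne_top (n : ℕ) (R : ℝ) : volume (Box n R) ≠ ⊤ := by
  rw [Box, volume_pi_pi]
  exact ENNReal.prod_ne_top fun i _ => by simp [Real.volume_Icc]

lemma cons_mid (n : ℕ) (s₁ s₂ : ℝ) (x y : Fin n → ℝ) :
    (Fin.cons s₁ x + Fin.cons s₂ y) / 2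
      = (Fin.cons ((s₁ + s₂)/2) ((x + y)/2) : Fin (n+1) → ℝ) := by
  funext i
  refine Fin.cases ?_ (fun j => ?_) i <;>
    simp [Pi.add_apply, Pi.div_apply]

theorem pl_dim_s12 : ∀ (n : ℕ) (f g h : (Fin n → ℝ) → ℝ≥0∞), Measurable f → Measurable g →
    Measurable h → ∀ (B : ℝ≥0∞), B ≠ ⊤ → ∀ (R : ℝ),
    (∀ x, f x ≤ B) → (∀ x, g x ≤ B) →
    (∀ x, x ∉ Box n R → f x = 0) → (∀ y, y ∉ Box n R → g y = 0) →
    (∀ x y, f x * g y ≤ h ((x + y) / 2) ^ 2) →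
    (∫⁻ x, f x) * (∫⁻ y, g y) ≤ (∫⁻ z, h z) ^ 2 := by
  intro n
  induction n with
  | zero =>
    intro f g h hf hg hh B hB R hfB hgB hfR hgR hyp
    rw [lintegral_unique f, lintegral_unique g, lintegral_unique h]
    have hvol : volume (univ : Set (Fin 0 → ℝ)) = 1 := by
      simp [MeasureTheory.volume_pi, Measure.pi_univ]
    rw [hvol]
    simp only [mul_one]
    have := hyp default default
    have hd : ((default : Fin 0 → ℝ) + default) / 2 = default := Subsingleton.elim _ _
    rw [hd] at this
    convert this using 3 <;> exact Subsingleton.elim _ _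
  | succ n ih =>
    intro f g h hf hg hh B hB R hfB hgB hfR hgR hyp
    set e := MeasurableEquiv.piFinSuccAbove (fun _ : Fin (n+1) => ℝ) 0 with he
    have mp : MeasurePreserving e := volume_preserving_piFinSuccAbove (fun _ : Fin (n+1) => ℝ) 0
    have hsymm : ∀ p : ℝ × (Fin n → ℝ), e.symm p = Fin.cons p.1 p.2 := by
      intro p
      simp [he, MeasurableEquiv.piFinSuccAbove, Fin.insertNthEquiv, Fin.insertNth_zero,
        Fin.consEquiv]
    have hconsm : Measurable (fun p : ℝ × (Fin n → ℝ) => (Fin.cons p.1 p.2 : Fin (n+1) → ℝ)) := by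
      have : (fun p : ℝ × (Fin n → ℝ) => (Fin.cons p.1 p.2 : Fin (n+1) → ℝ)) = e.symm := by
        funext p; rw [hsymm]
      rw [this]
      exact e.symm.measurable
    -- slice functions
    set φ : ℝ → ℝ≥0∞ := fun s => ∫⁻ x', f (Fin.cons s x') with hφ
    set γ : ℝ → ℝ≥0∞ := fun s => ∫⁻ y', g (Fin.cons s y') with hγ
    set η : ℝ → ℝ≥0∞ := fun s => ∫⁻ z', h (Fin.cons s z') with hη
    have hFm : Measurable (fun p : ℝ × (Fin n → ℝ) => f (Fin.cons p.1 p.2)) := hf.comp hconsm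
    have hGm : Measurable (fun p : ℝ × (Fin n → ℝ) => g (Fin.cons p.1 p.2)) := hg.comp hconsm
    have hHm : Measurable (fun p : ℝ × (Fin n → ℝ) => h (Fin.cons p.1 p.2)) := hh.comp hconsm
    have hφm : Measurable φ :=
      Measurable.lintegral_prod_right (f := fun (s:ℝ) (x' : Fin n → ℝ) => f (Fin.cons s x')) hFm
    have hγm : Measurable γ :=
      Measurable.lintegral_prod_right (f := fun (s:ℝ) (y' : Fin n → ℝ) => g (Fin.cons s y')) hGm
    have hηm : Measurable η :=
      Measurable.lintegral_prod_right (f := fun (s:ℝ) (z' : Fin n → ℝ) => h (Fin.cons s z')) hHm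
    -- integral identities
    have int_eq : ∀ (u : (Fin (n+1) → ℝ) → ℝ≥0∞), Measurable u →
        ∫⁻ x, u x = ∫⁻ s, ∫⁻ x', u (Fin.cons s x') := by
      intro u hu
      rw [← (MeasurePreserving.symm e mp).lintegral_comp hu]
      rw [show (fun p : ℝ × (Fin n → ℝ) => u (e.symm p))
        = fun p : ℝ × (Fin n → ℝ) => u (Fin.cons p.1 p.2) by funext p; rw [hsymm]]
      exact lintegral_prod _ (hu.comp hconsm).aemeasurable
    -- slice membership in the box
    have cons_box : ∀ (s : ℝ) (x' : Fin n → ℝ), (Fin.cons s x' : Fin (n+1) → ℝ) ∈ Box (n+1) R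
        ↔ (s ∈ Icc (-R) R ∧ x' ∈ Box n R) := by
      intro s x'
      simp only [Box, Set.mem_pi, Set.mem_univ, forall_true_left, true_implies]
      constructor
      · intro hx
        refine ⟨hx 0, fun j => ?_⟩
        have := hx j.succ
        simpa using this
      · rintro ⟨h0, hrest⟩ i
        refine Fin.cases ?_ (fun j => ?_) i
        · simpa using h0
        · simpa using hrest j
    -- bound for slice integrals
    set B' : ℝ≥0∞ := B * volume (Box n R) with hB'
    have hB'T : B' ≠ ⊤ := ENNReal.mul_ne_top hB (Box_volume_ne_top n R)
    have hφB : ∀ s, φ s ≤ B' := by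
      intro s
      calc φ s ≤ ∫⁻ x', (Box n R).indicator (fun _ => B) x' := by
            apply lintegral_mono
            intro x'
            by_cases hx : x' ∈ Box n R
            · rw [indicator_of_mem hx]; exact hfB _
            · rw [indicator_of_notMem hx]
              exact le_of_eq (hfR _ (fun hc => hx ((cons_box s x').mp hc).2))
        _ = B' := by rw [lintegral_indicator_const (Box_measurable n R)]
    have hγB : ∀ s, γ s ≤ B' := by
      intro s
      calc γ s ≤ ∫⁻ y', (Box n R).indicator (fun _ => B) y' := by
            apply lintegral_mono
            intro y'
            by_cases hy : y' ∈ Box n R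
            · rw [indicator_of_mem hy]; exact hgB _
            · rw [indicator_of_notMem hy]
              exact le_of_eq (hgR _ (fun hc => hy ((cons_box s y').mp hc).2))
        _ = B' := by rw [lintegral_indicator_const (Box_measurable n R)]
    -- 1D hypothesis via induction hypothesis
    have hyp1 : ∀ s₁ s₂ : ℝ, φ s₁ * γ s₂ ≤ η ((s₁ + s₂) / 2) ^ 2 := by
      intro s₁ s₂
      apply ih (fun x' => f (Fin.cons s₁ x')) (fun y' => g (Fin.cons s₂ y'))
        (fun z' => h (Fin.cons ((s₁ + s₂)/2) z'))
        (hf.comp (hconsm.comp measurable_prodMk_left))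
        (hg.comp (hconsm.comp measurable_prodMk_left))
        (hh.comp (hconsm.comp measurable_prodMk_left))
        B hB R (fun x' => hfB _) (fun y' => hgB _)
        (fun x' hx' => hfR _ (fun hc => hx' ((cons_box s₁ x').mp hc).2))
        (fun y' hy' => hgR _ (fun hc => hy' ((cons_box s₂ y').mp hc).2))
      intro x' y'
      have := hyp (Fin.cons s₁ x') (Fin.cons s₂ y')
      rwa [cons_mid] at this
    have key := pl_dim1 φ γ η hφm hγm hηm hB'T hφB hγB hyp1
    rw [int_eq f hf, int_eq g hg, int_eq h hh]
    exact key

section NormFacts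
variable {d : ℕ} (N : (Fin d → ℝ) → ℝ)
  (hN0 : ∀ x, N x = 0 ↔ x = 0)
  (hN1 : ∀ (a : ℝ) (x : Fin d → ℝ), N (a • x) = |a| * N x)
  (hN2 : ∀ x y : Fin d → ℝ, N (x + y) ≤ N x + N y)

include hN0 hN1 hN2

lemma N_zero : N 0 = 0 := (hN0 0).mpr rfl

lemma N_neg : ∀ x, N (-x) = N x := by
  intro x
  have := hN1 (-1) x
  simpa using this

lemma N_nonneg : ∀ x, 0 ≤ N x := by
  intro x
  have h := hN2 x (-x)
  rw [add_neg_cancel, N_zero N hN0 hN1 hN2, N_neg N hN0 hN1 hN2] at h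
  linarith

lemma N_sum_le {ι : Type*} (s : Finset ι) (v : ι → Fin d → ℝ) :
    N (∑ i ∈ s, v i) ≤ ∑ i ∈ s, N (v i) := by
  classical
  induction s using Finset.induction with
  | empty => simp [N_zero N hN0 hN1 hN2]
  | @insert j t hj ih =>
    rw [Finset.sum_insert hj, Finset.sum_insert hj]
    exact le_trans (hN2 _ _) (by linarith)

lemma N_bound : ∃ C : ℝ, 0 ≤ C ∧ ∀ x, N x ≤ C * ‖x‖ := by
  classical
  refine ⟨∑ i : Fin d, N (Pi.single i 1), Finset.sum_nonneg fun i _ => N_nonneg N hN0 hN1 hN2 _, ?_⟩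
  intro x
  have hx : x = ∑ i : Fin d, (x i) • (Pi.single i 1 : Fin d → ℝ) := by
    funext j
    rw [Finset.sum_apply]
    simp [Pi.single_apply]
  calc N x = N (∑ i : Fin d, (x i) • (Pi.single i 1 : Fin d → ℝ)) := by rw [← hx]
    _ ≤ ∑ i : Fin d, N ((x i) • (Pi.single i 1 : Fin d → ℝ)) := N_sum_le N hN0 hN1 hN2 _ _
    _ ≤ ∑ i : Fin d, ‖x‖ * N (Pi.single i 1) := by
        apply Finset.sum_le_sum
        intro i _
        rw [hN1]
        apply mul_le_mul_of_nonneg_right _ (N_nonneg N hN0 hN1 hN2 _)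
        calc |x i| = ‖x i‖ := (Real.norm_eq_abs _).symm
          _ ≤ ‖x‖ := norm_le_pi_norm x i
    _ = (∑ i : Fin d, N (Pi.single i 1)) * ‖x‖ := by
        rw [Finset.sum_mul]; simp [mul_comm]

lemma N_continuous : Continuous N := by
  obtain ⟨C, hC0, hC⟩ := N_bound N hN0 hN1 hN2
  rw [Metric.continuous_iff]
  intro x ε hε
  refine ⟨ε / (C + 1), by positivity, fun y hy => ?_⟩
  have key : ∀ u v : Fin d → ℝ, N u - N v ≤ C * ‖u - v‖ := by
    intro u v
    have h1 := hN2 (u - v) v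
    rw [sub_add_cancel] at h1
    have := hC (u - v)
    linarith
  have h1 := key y x
  have h2 := key x y
  rw [norm_sub_rev] at h2
  have hd' : dist y x = ‖y - x‖ := by rw [dist_eq_norm]
  rw [Real.dist_eq]
  rw [hd'] at hy
  have hCb : C * ‖y - x‖ ≤ C * (ε / (C + 1)) := mul_le_mul_of_nonneg_left hy.le hC0
  have : C * (ε / (C + 1)) < ε := by
    have h4 : C / (C + 1) < 1 := (div_lt_one (by positivity)).mpr (by linarith)
    calc C * (ε / (C + 1)) = (C / (C + 1)) * ε := by ring
      _ < 1 * ε := mul_lt_mul_of_pos_right h4 hε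
      _ = ε := one_mul ε
  rw [abs_lt]
  constructor <;> nlinarith

lemma N_lower (hd : 0 < d) : ∃ ε : ℝ, 0 < ε ∧ ∀ x, ε * ‖x‖ ≤ N x := by
  haveI : Nonempty (Fin d) := ⟨⟨0, hd⟩⟩
  have hsne : (Metric.sphere (0 : Fin d → ℝ) 1).Nonempty :=
    NormedSpace.sphere_nonempty.mpr zero_le_one
  obtain ⟨x₀, hx₀s, hx₀min⟩ := (isCompact_sphere (0 : Fin d → ℝ) 1).exists_isMinOn hsne
    (N_continuous N hN0 hN1 hN2).continuousOn
  have hx₀norm : ‖x₀‖ = 1 := by simpa using hx₀s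
  have hx₀ne : x₀ ≠ 0 := by
    intro h; rw [h] at hx₀norm; simp at hx₀norm
  have hε : 0 < N x₀ :=
    lt_of_le_of_ne (N_nonneg N hN0 hN1 hN2 x₀) (fun h => hx₀ne ((hN0 x₀).mp h.symm))
  refine ⟨N x₀, hε, fun x => ?_⟩
  rcases eq_or_ne x 0 with rfl | hx
  · simp [N_zero N hN0 hN1 hN2]
  · have hxn : 0 < ‖x‖ := norm_pos_iff.mpr hx
    have hmem : ‖x‖⁻¹ • x ∈ Metric.sphere (0 : Fin d → ℝ) 1 := by
      simp [norm_smul, abs_of_pos (inv_pos.mpr hxn), inv_mul_cancel₀ (ne_of_gt hxn)]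
    have h2 : N (‖x‖⁻¹ • x) = ‖x‖⁻¹ * N x := by
      rw [hN1, abs_of_pos (inv_pos.mpr hxn)]
    have h3 : N x₀ ≤ N (‖x‖⁻¹ • x) := hx₀min hmem
    rw [h2] at h3
    calc N x₀ * ‖x‖ ≤ (‖x‖⁻¹ * N x) * ‖x‖ := by
          apply mul_le_mul_of_nonneg_right h3 hxn.le
      _ = N x := by field_simp
end NormFacts

/-- Isodiametric inequality for an arbitrary norm `N` on `ℝ^d` (modeled as `Fin d → ℝ`):
if `A` is bounded with `N`-diameter `D`, then the outer Lebesgue measure of `A` is at most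
`(D/2)^d` times the measure of the `N`-unit ball. -/
theorem isodiametric_inequality
    (d : ℕ) (hd : 0 < d)
    (N : (Fin d → ℝ) → ℝ)
    (hN0 : ∀ x, N x = 0 ↔ x = 0)
    (hN1 : ∀ (a : ℝ) (x : Fin d → ℝ), N (a • x) = |a| * N x)
    (hN2 : ∀ x y : Fin d → ℝ, N (x + y) ≤ N x + N y)
    (A : Set (Fin d → ℝ)) (hA : ∃ c : ℝ, ∀ x ∈ A, N x ≤ c)
    (D : ℝ) (hD : D = sSup {r : ℝ | ∃ x ∈ A, ∃ y ∈ A, N (x - y) = r}) :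
    volume A ≤ ENNReal.ofReal ((D / 2) ^ d) * volume {x : Fin d → ℝ | N x < 1} := by
  have hNz : N 0 = 0 := (hN0 0).mpr rfl
  have hNneg : ∀ x, N (-x) = N x := N_neg N hN0 hN1 hN2
  have hNnn : ∀ x, 0 ≤ N x := N_nonneg N hN0 hN1 hN2
  have hNc : Continuous N := N_continuous N hN0 hN1 hN2
  obtain ⟨ε, hεpos, hεlow⟩ := N_lower N hN0 hN1 hN2 hd
  rcases A.eq_empty_or_nonempty with rfl | hAne
  · simp
  obtain ⟨x₀, hx₀⟩ := hAne
  obtain ⟨cb, hcb⟩ := hA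
  -- diameter facts
  have hSbdd : BddAbove {r : ℝ | ∃ x ∈ A, ∃ y ∈ A, N (x - y) = r} := by
    refine ⟨2 * cb, ?_⟩
    rintro r ⟨x, hx, y, hy, rfl⟩
    have h1 : N (x - y) ≤ N x + N (-y) := by rw [sub_eq_add_neg]; exact hN2 _ _
    rw [hNneg] at h1
    have := hcb x hx; have := hcb y hy
    linarith
  have hD0 : 0 ≤ D := by
    rw [hD]
    exact le_csSup hSbdd ⟨x₀, hx₀, x₀, hx₀, by simp [hNz]⟩
  have hdiam : ∀ x ∈ A, ∀ y ∈ A, N (x - y) ≤ D := fun x hx y hy =>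
    hD ▸ le_csSup hSbdd ⟨x, hx, y, hy, rfl⟩
  -- convex hull and closure
  set K := closure (convexHull ℝ A) with hK
  have hAK : A ⊆ K := fun x hx => subset_closure (subset_convexHull ℝ A hx)
  have conv : ∀ v : Fin d → ℝ, Convex ℝ {x | N (x - v) ≤ D} := by
    intro v x hx y hy a b ha hb hab
    simp only [mem_setOf_eq] at hx hy ⊢
    have hv : a • v + b • v = v := by rw [← add_smul, hab, one_smul]
    have heq : a • x + b • y - v = a • (x - v) + b • (y - v) := by
      conv_lhs => rw [← hv]
      rw [smul_sub, smul_sub]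
      abel
    calc N (a • x + b • y - v) = N (a • (x - v) + b • (y - v)) := by rw [heq]
      _ ≤ N (a • (x - v)) + N (b • (y - v)) := hN2 _ _
      _ = a * N (x - v) + b * N (y - v) := by
          rw [hN1, hN1, abs_of_nonneg ha, abs_of_nonneg hb]
      _ ≤ a * D + b * D :=
          add_le_add (mul_le_mul_of_nonneg_left hx ha) (mul_le_mul_of_nonneg_left hy hb)
      _ = D := by rw [← add_mul, hab, one_mul]
  have step1 : ∀ x ∈ convexHull ℝ A, ∀ y ∈ convexHull ℝ A, N (x - y) ≤ D := by
    have h1 : ∀ y' ∈ A, ∀ x' ∈ convexHull ℝ A, N (x' - y') ≤ D := by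
      intro y' hy'
      exact fun x' hx' =>
        convexHull_min (fun z hz => hdiam z hz y' hy') (conv y') hx'
    intro x hx y hy
    have h2 : A ⊆ {y' | N (x - y') ≤ D} := fun y' hy' => h1 y' hy' x hx
    have hconv2 : Convex ℝ {y' | N (x - y') ≤ D} := by
      have hset : {y' : Fin d → ℝ | N (x - y') ≤ D} = {y' | N (y' - x) ≤ D} := by
        ext y'
        simp only [mem_setOf_eq]
        rw [show x - y' = -(y' - x) by abel, hNneg]
      rw [hset]
      exact conv x
    exact convexHull_min h2 hconv2 hy
  have hKdiam : ∀ x ∈ K, ∀ y ∈ K, N (x - y) ≤ D := by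
    have hsub : K ×ˢ K ⊆ {p : (Fin d → ℝ) × (Fin d → ℝ) | N (p.1 - p.2) ≤ D} := by
      rw [hK, ← closure_prod_eq]
      apply closure_minimal
      · rintro ⟨x, y⟩ ⟨hx, hy⟩
        exact step1 x hx y hy
      · exact IsClosed.preimage (hNc.comp (continuous_fst.sub continuous_snd)) isClosed_Iic
    exact fun x hx y hy => hsub (Set.mk_mem_prod hx hy)
  -- boundedness
  have hAbd : Bornology.IsBounded A := by
    rw [isBounded_iff_forall_norm_le]
    refine ⟨cb / ε, fun x hx => ?_⟩
    have h1 := hεlow x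
    have h2 := hcb x hx
    rw [le_div_iff₀ hεpos, mul_comm]
    linarith
  obtain ⟨R, hR⟩ := isBounded_iff_forall_norm_le.mp ((isBounded_convexHull.mpr hAbd).closure)
  have hKR : ∀ x ∈ K, x ∈ Box d R := by
    intro x hx
    intro i _
    rw [mem_Icc, ← abs_le]
    calc |x i| = ‖x i‖ := (Real.norm_eq_abs _).symm
      _ ≤ ‖x‖ := norm_le_pi_norm x i
      _ ≤ R := hR x hx
  -- PL application
  have hKm : MeasurableSet K := isClosed_closure.measurableSet
  have hnegKm : MeasurableSet (-K) := hKm.neg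
  set C := {z : Fin d → ℝ | N z ≤ D / 2} with hC
  have hCcl : IsClosed C := IsClosed.preimage hNc isClosed_Iic
  have hCm : MeasurableSet C := hCcl.measurableSet
  set f : (Fin d → ℝ) → ℝ≥0∞ := K.indicator (fun _ => 1) with hf
  set g : (Fin d → ℝ) → ℝ≥0∞ := (-K).indicator (fun _ => 1) with hg
  set h : (Fin d → ℝ) → ℝ≥0∞ := C.indicator (fun _ => 1) with hh
  have hyp : ∀ x y, f x * g y ≤ h ((x + y) / 2) ^ 2 := by
    intro x y
    by_cases hx : x ∈ K
    · by_cases hy : y ∈ -K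
      · have hmid : (x + y) / 2 ∈ C := by
          have hyK : -y ∈ K := Set.mem_neg.mp hy
          have hxy : N (x + y) ≤ D := by
            have := hKdiam x hx (-y) hyK
            rwa [sub_neg_eq_add] at this
          have heq : (x + y) / 2 = (2⁻¹ : ℝ) • (x + y) := by
            funext i
            simp [Pi.smul_apply, smul_eq_mul]
            ring
          rw [hC, mem_setOf_eq, heq, hN1]
          rw [abs_of_pos (by norm_num : (0:ℝ) < 2⁻¹)]
          linarith
        rw [hf, hg, hh, indicator_of_mem hx, indicator_of_mem hy, indicator_of_mem hmid]
        norm_num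
      · rw [hg, indicator_of_notMem hy, mul_zero]
        exact zero_le
    · rw [hf, indicator_of_notMem hx, zero_mul]
      exact zero_le
  have key := pl_dim_s12 d f g h (measurable_const.indicator hKm) (measurable_const.indicator hnegKm)
    (measurable_const.indicator hCm) 1 one_ne_top R
    (fun x => indicator_le_self' (fun _ _ => zero_le) x |>.trans (by by_cases hx : x ∈ K <;> simp [hf, hx]))
    (fun y => by by_cases hy : y ∈ -K <;> simp [hg, hy])
    (fun x hx => by
      rw [hf, indicator_of_notMem (fun hc => hx (hKR x hc))])
    (fun y hy => by
      rw [hg, indicator_of_notMem]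
      intro hc
      apply hy
      have h1 : -y ∈ K := Set.mem_neg.mp hc
      have := hKR (-y) h1
      intro i _
      have h2 := this i (Set.mem_univ i)
      rw [mem_Icc] at h2 ⊢
      simp only [Pi.neg_apply] at h2
      constructor <;> linarith [h2.1, h2.2])
    hyp
  have hif : ∫⁻ x, f x = volume K := lintegral_indicator_one hKm
  have hig : ∫⁻ y, g y = volume (-K) := lintegral_indicator_one hnegKm
  have hih : ∫⁻ z, h z = volume C := lintegral_indicator_one hCm
  rw [hif, hig, hih, Measure.measure_neg] at key
  have hKC : volume K ≤ volume C := by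
    by_contra hlt
    push_neg at hlt
    have := ENNReal.pow_lt_pow_left (by norm_num) hlt (n := 2)
    rw [← pow_two] at key
    exact absurd (lt_of_lt_of_le this key) (lt_irrefl _)
  -- scaling and limit
  set V1 := volume {x : Fin d → ℝ | N x < 1} with hV1
  have hV1top : V1 ≠ ⊤ := by
    have hsub : {x : Fin d → ℝ | N x < 1} ⊆ Metric.closedBall 0 ε⁻¹ := by
      intro x hx
      rw [Metric.mem_closedBall, dist_zero_right]
      have h1 := hεlow x
      have h2 : N x < 1 := hx
      have h3 : ε * ‖x‖ ≤ 1 := le_of_lt (lt_of_le_of_lt h1 h2)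
      rw [← mul_le_mul_iff_right₀ hεpos, mul_inv_cancel₀ (ne_of_gt hεpos)]
      exact h3
    exact ne_top_of_le_ne_top (isCompact_closedBall (0 : Fin d → ℝ) ε⁻¹).measure_lt_top.ne
      (measure_mono hsub)
  have hscale : ∀ r : ℝ, D / 2 < r → volume C ≤ ENNReal.ofReal (r ^ d) * V1 := by
    intro r hr
    have hr0 : 0 < r := lt_of_le_of_lt (by linarith) hr
    have hsub : C ⊆ r • {x : Fin d → ℝ | N x < 1} := by
      intro x hx
      refine ⟨r⁻¹ • x, ?_, smul_inv_smul₀ (ne_of_gt hr0) x⟩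
      show N (r⁻¹ • x) < 1
      rw [hN1, abs_of_pos (inv_pos.mpr hr0)]
      have hxD : N x ≤ D / 2 := hx
      calc r⁻¹ * N x ≤ r⁻¹ * (D / 2) :=
            mul_le_mul_of_nonneg_left hxD (inv_pos.mpr hr0).le
        _ < 1 := by rw [inv_mul_eq_div]; exact (div_lt_one hr0).mpr hr
    calc volume C ≤ volume (r • {x : Fin d → ℝ | N x < 1}) := measure_mono hsub
      _ = ENNReal.ofReal (r ^ d) * V1 := by
          rw [Measure.addHaar_smul, Module.finrank_fin_fun, abs_of_pos (pow_pos hr0 d)]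
  have hlim : volume C ≤ ENNReal.ofReal ((D / 2) ^ d) * V1 := by
    have htends : Filter.Tendsto (fun r : ℝ => ENNReal.ofReal (r ^ d) * V1)
        (nhdsWithin (D / 2) (Ioi (D / 2))) (nhds (ENNReal.ofReal ((D / 2) ^ d) * V1)) := by
      apply ENNReal.Tendsto.mul_const
      · exact Filter.Tendsto.mono_left
          ((ENNReal.continuous_ofReal.tendsto _).comp ((continuous_pow d).tendsto _))
          nhdsWithin_le_nhds
      · exact Or.inr hV1top
    apply ge_of_tendsto htends
    filter_upwards [self_mem_nhdsWithin] with r hr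
    exact hscale r hr
  calc volume A ≤ volume K := measure_mono hAK
    _ ≤ volume C := hKC
    _ ≤ ENNReal.ofReal ((D / 2) ^ d) * V1 := hlim

end IsodiametricAux
end

section
/- Let n ∈ ℕ, and for each i ∈ {1,…,n} let d_i, k_i ∈ ℕ, ε_i ∈ (0, ∞), and let 𝒫_i be a (k_i, ε_i)-secluded partition of ℝ^{d_i}. Then the product partition 𝒫 = {X_1 × ⋯ × X_n : X_i ∈ 𝒫_i for each i}, viewed as a partition of ℝ^d with d = d_1 + ⋯ + d_n, is a (k, ε)-secluded partition of ℝ^d where k = k_1 · k_2 ⋯ k_n and ε = min_{i∈{1,…,n}} ε_i. -/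
open MeasureTheory

lemma encard_univ_pi_le {ι : Type*} [Fintype ι] {β : ι → Type*} (Q : ∀ i, Set (β i))
    (k : ι → ℕ) (h : ∀ i, (Q i).encard ≤ (k i : ℕ∞)) :
    (Set.univ.pi Q).encard ≤ ((∏ i, k i : ℕ) : ℕ∞) := by
  have hf : ∀ i, Finite (Q i) := fun i => (Set.finite_of_encard_le_coe (h i)).to_subtype
  rw [Set.encard, ENat.card_congr (Equiv.Set.univPi Q), ENat.card_eq_coe_natCard,
    Nat.card_pi, Nat.cast_le]
  refine Finset.prod_le_prod' fun i _ => ?_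
  have hi := h i
  rwa [Set.encard, ENat.card_eq_coe_natCard, Nat.cast_le] at hi

/-- Product partition seclusion guarantees: if for each `i ∈ {1,…,n}` the partition `P i` of
`ℝ^(dim i)` is `(k i, εf i)`-secluded, then the product partition (of the ℓ∞-product space
`Π i, ℝ^(dim i)`, which is `ℝ^(Σ dim i)` with coordinates concatenated) is
`(Π k i, min εf i)`-secluded. -/
theorem product_partition_secluded
    (n : ℕ) (hn : 0 < n) (dim : Fin n → ℕ) (k : Fin n → ℕ)
    (εf : Fin n → ℝ) (hεf : ∀ i, 0 < εf i)
    (P : (i : Fin n) → Set (Set (Fin (dim i) → ℝ)))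
    (hpart : ∀ i, Setoid.IsPartition (P i))
    (hsec : ∀ i, ∀ p : Fin (dim i) → ℝ,
      {X ∈ P i | (X ∩ Metric.closedBall p (εf i)).Nonempty}.encard ≤ (k i : ℕ∞)) :
    Setoid.IsPartition
      {S : Set ((i : Fin n) → Fin (dim i) → ℝ) |
        ∃ X : (i : Fin n) → Set (Fin (dim i) → ℝ),
          (∀ i, X i ∈ P i) ∧ S = Set.univ.pi X} ∧
    ∀ p : (i : Fin n) → Fin (dim i) → ℝ,
      {S ∈ {S : Set ((i : Fin n) → Fin (dim i) → ℝ) |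
              ∃ X : (i : Fin n) → Set (Fin (dim i) → ℝ),
                (∀ i, X i ∈ P i) ∧ S = Set.univ.pi X} |
          (S ∩ Metric.closedBall p (⨅ i, εf i)).Nonempty}.encard
        ≤ ((∏ i, k i : ℕ) : ℕ∞) := by
  constructor
  · constructor
    · rintro ⟨X, hX, hS⟩
      have hne : ∀ i, (X i).Nonempty := fun i =>
        Set.nonempty_iff_ne_empty.2 fun h => (hpart i).1 (h ▸ hX i)
      have h2 := Set.univ_pi_nonempty_iff.2 hne
      rw [← hS] at h2
      exact h2.ne_empty rfl
    · intro a
      choose X hX hun using fun i => (hpart i).2 (a i)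
      refine ⟨Set.univ.pi X, ⟨⟨X, fun i => (hX i).1, rfl⟩, fun i _ => (hX i).2⟩, ?_⟩
      rintro S ⟨⟨Y, hY, rfl⟩, haS⟩
      exact congrArg Set.univ.pi
        (funext fun i => hun i (Y i) ⟨hY i, haS i (Set.mem_univ i)⟩)
  · intro p
    set Q : ∀ i, Set (Set (Fin (dim i) → ℝ)) :=
      fun i => {X ∈ P i | (X ∩ Metric.closedBall (p i) (εf i)).Nonempty} with hQ
    have hsub : {S ∈ {S : Set ((i : Fin n) → Fin (dim i) → ℝ) |
              ∃ X : (i : Fin n) → Set (Fin (dim i) → ℝ),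
                (∀ i, X i ∈ P i) ∧ S = Set.univ.pi X} |
          (S ∩ Metric.closedBall p (⨅ i, εf i)).Nonempty}
        ⊆ (fun X => Set.univ.pi X) '' (Set.univ.pi Q) := by
      rintro S ⟨⟨X, hX, rfl⟩, x, hxS, hxB⟩
      refine ⟨X, fun i _ => ⟨hX i, x i, hxS i (Set.mem_univ i), ?_⟩, rfl⟩
      have h1 : dist x p ≤ ⨅ i, εf i := Metric.mem_closedBall.1 hxB
      have h2 : ⨅ i, εf i ≤ εf i :=
        ciInf_le (Set.Finite.bddBelow (Set.finite_range εf)) i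
      exact Metric.mem_closedBall.2 ((dist_le_pi_dist x p i).trans (h1.trans h2))
    calc _ ≤ ((fun X => Set.univ.pi X) '' (Set.univ.pi Q)).encard := Set.encard_mono hsub
      _ ≤ (Set.univ.pi Q).encard := Set.encard_image_le _ _
      _ ≤ _ := encard_univ_pi_le Q k fun i => hsec i (p i)
end

section
/- Let d ∈ ℕ, ε ∈ [0, ∞), and let 𝒫 be a unit cube partition of ℝ^d, i.e., a partition all of whose members are translates of [0,1)^d. Then 𝒫 is (k, ε)-secluded for k = ⌊(2 + 2ε)^d⌋; that is, for every p ∈ ℝ^d the closed ℓ∞ ball of radius ε centered at p intersects at most ⌊(2 + 2ε)^d⌋ members of 𝒫. -/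
open MeasureTheory

/-- Trivial seclusion bound for unit cube partitions: if `P` is a partition of `ℝ^d` (modeled
as `Fin d → ℝ` with the ℓ∞ norm) all of whose members are translates of `[0,1)^d`, then every
closed ℓ∞ ball of radius `ε` intersects at most `⌊(2 + 2ε)^d⌋` members of `P`. -/
theorem unit_cube_partition_trivially_secluded
    (d : ℕ) (hd : 0 < d) (ε : ℝ) (hε : 0 ≤ ε)
    (P : Set (Set (Fin d → ℝ))) (hP : Setoid.IsPartition P)
    (hcube : ∀ X ∈ P, ∃ t : Fin d → ℝ,
      X = Set.univ.pi fun i => Set.Ico (t i) (t i + 1)) :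
    ∀ p : Fin d → ℝ,
      {X ∈ P | (X ∩ Metric.closedBall p ε).Nonempty}.encard
        ≤ (⌊(2 + 2 * ε) ^ d⌋₊ : ℕ∞) := by
  intro p
  classical
  set a : Fin d → ℝ := fun i => p i - ε - 1 with ha
  set f : Set (Fin d → ℝ) → (Fin d → ℤ) := fun X i =>
    if h : ∃ t : Fin d → ℝ, X = Set.univ.pi fun j => Set.Ico (t j) (t j + 1)
    then ⌈h.choose i - a i⌉ else 0 with hf
  set S := {X ∈ P | (X ∩ Metric.closedBall p ε).Nonempty} with hS
  set M : ℤ := ⌈1 + 2 * ε⌉ with hM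
  set T : Finset (Fin d → ℤ) := Fintype.piFinset fun _ => Finset.Icc 1 M with hT
  have key : ∀ X ∈ S, ∃ h : ∃ t : Fin d → ℝ,
      X = Set.univ.pi fun j => Set.Ico (t j) (t j + 1),
      ∀ i, 0 < h.choose i - a i ∧ h.choose i - a i ≤ 1 + 2 * ε := by
    rintro X ⟨hXP, x, hxX, hxB⟩
    have h := hcube X hXP
    refine ⟨h, fun i => ?_⟩
    have hx : x ∈ Set.univ.pi fun j => Set.Ico (h.choose j) (h.choose j + 1) := by
      rw [← h.choose_spec]; exact hxX
    have hxi := hx i (Set.mem_univ i)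
    have hdist : dist (x i) (p i) ≤ ε :=
      (dist_pi_le_iff hε).mp (Metric.mem_closedBall.mp hxB) i
    rw [Real.dist_eq, abs_le] at hdist
    constructor <;> simp only [ha] <;>
      [linarith [hxi.1, hxi.2, hdist.1]; linarith [hxi.1, hdist.2]]
  have hinj : Set.InjOn f S := by
    intro X hX Y hY hfXY
    obtain ⟨hXe, hXb⟩ := key X hX
    obtain ⟨hYe, hYb⟩ := key Y hY
    set t := hXe.choose with hts
    set s := hYe.choose with hss
    have hclose : ∀ i, |t i - s i| < 1 := by
      intro i
      have h1 : ⌈t i - a i⌉ = ⌈s i - a i⌉ := by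
        have := congrFun hfXY i
        simpa only [hf, dif_pos hXe, dif_pos hYe, ← hts, ← hss] using this
      have h2 : s i - a i ≤ (⌈t i - a i⌉ : ℝ) := h1 ▸ Int.le_ceil _
      have h3 : t i - a i ≤ (⌈s i - a i⌉ : ℝ) := h1 ▸ Int.le_ceil _
      have h4 : (⌈t i - a i⌉ : ℝ) < (t i - a i) + 1 := Int.ceil_lt_add_one _
      have h5 : (⌈s i - a i⌉ : ℝ) < (s i - a i) + 1 := Int.ceil_lt_add_one _
      rw [abs_lt]; constructor <;> linarith
    set z : Fin d → ℝ := fun i => max (t i) (s i) with hz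
    have hzX : z ∈ X := by
      rw [hXe.choose_spec]
      intro i _
      have h := abs_lt.mp (hclose i)
      exact ⟨le_max_left _ _, max_lt (by linarith) (by linarith)⟩
    have hzY : z ∈ Y := by
      rw [hYe.choose_spec]
      intro i _
      have h := abs_lt.mp (hclose i)
      exact ⟨le_max_right _ _, max_lt (by linarith) (by linarith)⟩
    exact (hP.2 z).unique ⟨hX.1, hzX⟩ ⟨hY.1, hzY⟩
  have himg : f '' S ⊆ ↑T := by
    rintro _ ⟨X, hX, rfl⟩
    obtain ⟨hXe, hXb⟩ := key X hX
    rw [Finset.mem_coe, hT, Fintype.mem_piFinset]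
    simp only [Finset.mem_Icc]
    intro i
    simp only [hf, dif_pos hXe]
    exact ⟨Int.ceil_pos.mpr (hXb i).1, Int.ceil_le_ceil (hXb i).2⟩
  have hcard : T.card ≤ ⌊(2 + 2 * ε) ^ d⌋₊ := by
    have hTc : T.card = M.toNat ^ d := by
      rw [hT, Fintype.card_piFinset]
      simp [Int.card_Icc]
    rw [hTc]
    have hMle : M.toNat ≤ ⌊2 + 2 * ε⌋₊ := by
      have h1 : M ≤ ⌊2 + 2 * ε⌋ := by
        have : (2 : ℝ) + 2 * ε = (1 + 2 * ε) + 1 := by ring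
        rw [hM, this, Int.floor_add_one]
        exact Int.ceil_le_floor_add_one _
      calc M.toNat ≤ (⌊2 + 2 * ε⌋).toNat := Int.toNat_le_toNat h1
        _ = ⌊2 + 2 * ε⌋₊ := Int.floor_toNat _
    calc M.toNat ^ d ≤ ⌊2 + 2 * ε⌋₊ ^ d := Nat.pow_le_pow_left hMle d
      _ ≤ ⌊(2 + 2 * ε) ^ d⌋₊ := by
        apply Nat.le_floor
        push_cast
        exact pow_le_pow_left₀ (by positivity) (Nat.floor_le (by positivity)) d
  calc S.encard = (f '' S).encard := (hinj.encard_image).symm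
    _ ≤ (↑T : Set (Fin d → ℤ)).encard := Set.encard_mono himg
    _ = (T.card : ℕ∞) := Set.encard_coe_eq_coe_finsetCard T
    _ ≤ (⌊(2 + 2 * ε) ^ d⌋₊ : ℕ∞) := by exact_mod_cast hcard
end

section
/- Suppose that for every n ∈ ℕ there exists an (n + 1, 1/(2n))-secluded unit cube partition of ℝ^n. Then for any function f : ℕ → ℕ and every d ∈ ℕ, there exists a (k(d), ε(d))-secluded unit cube partition of ℝ^d with k(d) = (f(d) + 1)^{⌈d/f(d)⌉} and ε(d) = 1/(2 f(d)). -/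
open MeasureTheory


lemma encard_prod_le' {α β : Type*} {s : Set α} {t : Set β} {k l : ℕ}
    (hs : s.encard ≤ k) (ht : t.encard ≤ l) : (s ×ˢ t).encard ≤ ((k * l : ℕ) : ℕ∞) := by
  have hsf : s.Finite := Set.finite_of_encard_le_coe hs
  have htf : t.Finite := Set.finite_of_encard_le_coe ht
  have hpf : (s ×ˢ t).Finite := hsf.prod htf
  rw [hpf.encard_eq_coe_toFinset_card, Nat.cast_le]
  have hsub : hpf.toFinset ⊆ hsf.toFinset ×ˢ htf.toFinset := by
    intro x hx
    simp only [Set.Finite.mem_toFinset, Set.mem_prod] at hx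
    simp [Finset.mem_product, Set.Finite.mem_toFinset, hx.1, hx.2]
  calc hpf.toFinset.card ≤ (hsf.toFinset ×ˢ htf.toFinset).card := Finset.card_le_card hsub
    _ = hsf.toFinset.card * htf.toFinset.card := Finset.card_product _ _
    _ ≤ k * l := Nat.mul_le_mul
        (by rwa [hsf.encard_eq_coe_toFinset_card, Nat.cast_le] at hs)
        (by rwa [htf.encard_eq_coe_toFinset_card, Nat.cast_le] at ht)


lemma glue_combine {a b : ℕ} {ε : ℝ} (hε : 0 ≤ ε) {k l : ℕ}
    {P : Set (Set (Fin a → ℝ))} {Q : Set (Set (Fin b → ℝ))}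
    (hP : Setoid.IsPartition P) (hQ : Setoid.IsPartition Q)
    (hPc : ∀ X ∈ P, ∃ t : Fin a → ℝ, X = Set.univ.pi fun i => Set.Ico (t i) (t i + 1))
    (hQc : ∀ Y ∈ Q, ∃ t : Fin b → ℝ, Y = Set.univ.pi fun i => Set.Ico (t i) (t i + 1))
    (hPs : ∀ p : Fin a → ℝ,
      {X ∈ P | (X ∩ Metric.closedBall p ε).Nonempty}.encard ≤ (k : ℕ∞))
    (hQs : ∀ p : Fin b → ℝ,
      {Y ∈ Q | (Y ∩ Metric.closedBall p ε).Nonempty}.encard ≤ (l : ℕ∞)) :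
    ∃ R : Set (Set (Fin (a + b) → ℝ)),
      Setoid.IsPartition R ∧
      (∀ S ∈ R, ∃ t : Fin (a + b) → ℝ,
        S = Set.univ.pi fun i => Set.Ico (t i) (t i + 1)) ∧
      (∀ p : Fin (a + b) → ℝ,
        {S ∈ R | (S ∩ Metric.closedBall p ε).Nonempty}.encard ≤ ((k * l : ℕ) : ℕ∞)) := by
  classical
  set fr : (Fin (a + b) → ℝ) → (Fin a → ℝ) := fun z i => z (Fin.castAdd b i) with hfr
  set bk : (Fin (a + b) → ℝ) → (Fin b → ℝ) := fun z j => z (Fin.natAdd a j) with hbk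
  have hfr_app : ∀ (x : Fin a → ℝ) (y : Fin b → ℝ), fr (Fin.append x y) = x := by
    intro x y; funext i; simp [hfr, Fin.append_left]
  have hbk_app : ∀ (x : Fin a → ℝ) (y : Fin b → ℝ), bk (Fin.append x y) = y := by
    intro x y; funext j; simp [hbk, Fin.append_right]
  refine ⟨{S | ∃ X ∈ P, ∃ Y ∈ Q, S = fr ⁻¹' X ∩ bk ⁻¹' Y}, ⟨?_, ?_⟩, ?_, ?_⟩
  · -- ∅ not a member
    rintro ⟨X, hX, Y, hY, hS⟩
    obtain ⟨x, hx⟩ := Set.nonempty_iff_ne_empty.2 (fun h => hP.1 (h ▸ hX))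
    obtain ⟨y, hy⟩ := Set.nonempty_iff_ne_empty.2 (fun h => hQ.1 (h ▸ hY))
    have : Fin.append x y ∈ (∅ : Set (Fin (a + b) → ℝ)) := by
      rw [hS]
      exact ⟨by simp [hfr_app, hx], by simp [hbk_app, hy]⟩
    exact this
  · -- ∃!
    intro z
    obtain ⟨X, ⟨hX, hzX⟩, hXu⟩ := hP.2 (fr z)
    obtain ⟨Y, ⟨hY, hzY⟩, hYu⟩ := hQ.2 (bk z)
    refine ⟨fr ⁻¹' X ∩ bk ⁻¹' Y, ⟨⟨X, hX, Y, hY, rfl⟩, hzX, hzY⟩, ?_⟩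
    rintro S ⟨⟨X', hX', Y', hY', rfl⟩, hzX', hzY'⟩
    rw [hXu X' ⟨hX', hzX'⟩, hYu Y' ⟨hY', hzY'⟩]
  · -- cubes
    rintro S ⟨X, hX, Y, hY, rfl⟩
    obtain ⟨t, rfl⟩ := hPc X hX
    obtain ⟨s, rfl⟩ := hQc Y hY
    refine ⟨Fin.append t s, ?_⟩
    ext z
    simp only [Set.mem_inter_iff, Set.mem_preimage, Set.mem_pi, Set.mem_univ, true_implies,
      Set.mem_Ico]
    constructor
    · rintro ⟨h1, h2⟩ i
      refine Fin.addCases (fun i => ?_) (fun j => ?_) i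
      · rw [Fin.append_left]; exact h1 i
      · rw [Fin.append_right]; exact h2 j
    · intro h
      constructor
      · intro i; have := h (Fin.castAdd b i); rwa [Fin.append_left] at this
      · intro j; have := h (Fin.natAdd a j); rwa [Fin.append_right] at this
  · -- secludedness
    intro p
    have hsub : {S | (∃ X ∈ P, ∃ Y ∈ Q, S = fr ⁻¹' X ∩ bk ⁻¹' Y) ∧
        (S ∩ Metric.closedBall p ε).Nonempty} ⊆
        (fun q : Set (Fin a → ℝ) × Set (Fin b → ℝ) => fr ⁻¹' q.1 ∩ bk ⁻¹' q.2) ''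
          ({X ∈ P | (X ∩ Metric.closedBall (fr p) ε).Nonempty} ×ˢ
           {Y ∈ Q | (Y ∩ Metric.closedBall (bk p) ε).Nonempty}) := by
      rintro S ⟨⟨X, hX, Y, hY, rfl⟩, z, ⟨hzX, hzY⟩, hzB⟩
      have hdz : dist z p ≤ ε := Metric.mem_closedBall.1 hzB
      have hfz : fr z ∈ Metric.closedBall (fr p) ε := by
        rw [Metric.mem_closedBall]
        rw [dist_pi_le_iff hε]
        intro i
        exact (dist_le_pi_dist z p (Fin.castAdd b i)).trans hdz
      have hbz : bk z ∈ Metric.closedBall (bk p) ε := by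
        rw [Metric.mem_closedBall]
        rw [dist_pi_le_iff hε]
        intro j
        exact (dist_le_pi_dist z p (Fin.natAdd a j)).trans hdz
      exact ⟨(X, Y), ⟨⟨hX, fr z, hzX, hfz⟩, ⟨hY, bk z, hzY, hbz⟩⟩, rfl⟩
    calc _ ≤ _ := Set.encard_mono hsub
      _ ≤ _ := Set.encard_image_le _ _
      _ ≤ ((k * l : ℕ) : ℕ∞) := encard_prod_le' (hPs (fr p)) (hQs (bk p))
lemma glue_main
    (H : ∀ n : ℕ, 0 < n → ∃ P : Set (Set (Fin n → ℝ)),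
      Setoid.IsPartition P ∧
      (∀ X ∈ P, ∃ t : Fin n → ℝ,
        X = Set.univ.pi fun i => Set.Ico (t i) (t i + 1)) ∧
      (∀ p : Fin n → ℝ,
        {X ∈ P | (X ∩ Metric.closedBall p (1 / (2 * (n : ℝ)))).Nonempty}.encard
          ≤ ((n + 1 : ℕ) : ℕ∞)))
    (m : ℕ) (hm : 0 < m) :
    ∀ d : ℕ, 0 < d →
      ∃ P : Set (Set (Fin d → ℝ)),
        Setoid.IsPartition P ∧
        (∀ X ∈ P, ∃ t : Fin d → ℝ,
          X = Set.univ.pi fun i => Set.Ico (t i) (t i + 1)) ∧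
        (∀ p : Fin d → ℝ,
          {X ∈ P | (X ∩ Metric.closedBall p (1 / (2 * (m : ℝ)))).Nonempty}.encard
            ≤ (((m + 1) ^ ⌈(d : ℝ) / (m : ℝ)⌉₊ : ℕ) : ℕ∞)) := by
  have hm' : (0 : ℝ) < m := by exact_mod_cast hm
  intro d
  induction d using Nat.strong_induction_on with
  | _ d IH =>
    intro hd
    by_cases hdm : d ≤ m
    · obtain ⟨P, hPart, hCube, hSec⟩ := H d hd
      have hd' : (0 : ℝ) < d := by exact_mod_cast hd
      refine ⟨P, hPart, hCube, fun p => ?_⟩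
      have hεle : 1 / (2 * (m : ℝ)) ≤ 1 / (2 * (d : ℝ)) := by
        apply one_div_le_one_div_of_le (by linarith)
        have : (d : ℝ) ≤ m := by exact_mod_cast hdm
        linarith
      have hsub : {X ∈ P | (X ∩ Metric.closedBall p (1 / (2 * (m : ℝ)))).Nonempty} ⊆
          {X ∈ P | (X ∩ Metric.closedBall p (1 / (2 * (d : ℝ)))).Nonempty} := by
        rintro X ⟨hX, z, hzX, hzB⟩
        exact ⟨hX, z, hzX, Metric.closedBall_subset_closedBall hεle hzB⟩
      refine (Set.encard_mono hsub).trans ((hSec p).trans ?_)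
      rw [Nat.cast_le]
      have he1 : 1 ≤ ⌈(d : ℝ) / (m : ℝ)⌉₊ := Nat.one_le_iff_ne_zero.2 <| by
        rw [Ne, Nat.ceil_eq_zero, not_le]
        positivity
      calc d + 1 ≤ m + 1 := by omega
        _ = (m + 1) ^ 1 := (pow_one _).symm
        _ ≤ (m + 1) ^ ⌈(d : ℝ) / (m : ℝ)⌉₊ := Nat.pow_le_pow_right (by omega) he1
    · obtain ⟨d', rfl⟩ : ∃ d', d = m + d' := ⟨d - m, by omega⟩
      have hd'pos : 0 < d' := by omega
      obtain ⟨Q, hQ1, hQ2, hQ3⟩ := IH d' (by omega) hd'pos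
      obtain ⟨P, hP1, hP2, hP3⟩ := H m hm
      obtain ⟨R, hR1, hR2, hR3⟩ :=
        glue_combine (ε := 1 / (2 * (m : ℝ))) (by positivity)
          hP1 hQ1 hP2 hQ2
          (k := m + 1) (fun p => by exact_mod_cast hP3 p)
          (l := (m + 1) ^ ⌈(d' : ℝ) / (m : ℝ)⌉₊) hQ3
      refine ⟨R, hR1, hR2, fun p => (hR3 p).trans ?_⟩
      rw [Nat.cast_le]
      have hceil : ⌈((m + d' : ℕ) : ℝ) / (m : ℝ)⌉₊ = ⌈(d' : ℝ) / (m : ℝ)⌉₊ + 1 := by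
        have : ((m + d' : ℕ) : ℝ) / (m : ℝ) = (d' : ℝ) / (m : ℝ) + 1 := by
          push_cast
          field_simp
          ring
        rw [this, Nat.ceil_add_one (by positivity)]
      rw [hceil, pow_succ]
      exact Nat.le_of_eq (mul_comm _ _)

/-- Gluing construction: assuming that for every `n ≥ 1` there is an `(n+1, 1/(2n))`-secluded
unit cube partition of `ℝ^n` (modeled as `Fin n → ℝ` with the ℓ∞ norm), for any function
`f : ℕ → ℕ` (with positive values) and every `d ≥ 1` there is a
`((f d + 1)^⌈d / f d⌉, 1/(2 f d))`-secluded unit cube partition of `ℝ^d`. -/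
theorem glue_construction
    (H : ∀ n : ℕ, 0 < n → ∃ P : Set (Set (Fin n → ℝ)),
      Setoid.IsPartition P ∧
      (∀ X ∈ P, ∃ t : Fin n → ℝ,
        X = Set.univ.pi fun i => Set.Ico (t i) (t i + 1)) ∧
      (∀ p : Fin n → ℝ,
        {X ∈ P | (X ∩ Metric.closedBall p (1 / (2 * (n : ℝ)))).Nonempty}.encard
          ≤ ((n + 1 : ℕ) : ℕ∞))) :
    ∀ f : ℕ → ℕ, (∀ m, 0 < f m) → ∀ d : ℕ, 0 < d →
      ∃ P : Set (Set (Fin d → ℝ)),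
        Setoid.IsPartition P ∧
        (∀ X ∈ P, ∃ t : Fin d → ℝ,
          X = Set.univ.pi fun i => Set.Ico (t i) (t i + 1)) ∧
        (∀ p : Fin d → ℝ,
          {X ∈ P | (X ∩ Metric.closedBall p (1 / (2 * (f d : ℝ)))).Nonempty}.encard
            ≤ (((f d + 1) ^ ⌈(d : ℝ) / (f d : ℝ)⌉₊ : ℕ) : ℕ∞)) := by
  intro f hf d hd
  exact glue_main H (f d) (hf d) d hd
end
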